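/- arXiv:1801.08931 — 2 statements merged into one kernel-verified Lean document; each statement's English description precedes it below -/
import Mathlib

section
/- (Talagrand's L¹–L² inequality) There is an absolute constant C > 0 such that for every n ≥ 1 and every function f : C_n → ℝ, Var_{μⁿ}(f) ≤ C · Σ_{i=1}^n ‖D_i f‖₂² / (1 + log(‖D_i f‖₂ / ‖D_i f‖₁)), with the convention that a summand is 0 when D_i f is identically 0. -/
open scoped Classical

/-- Expectation on the discrete cube `{-1,1}ⁿ ≃ (Fin n → Bool)` under the uniform measure. -/
noncomputable def EC {n : ℕ} (g : (Fin n → Bool) → ℝ) : ℝ :=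
  (∑ x : Fin n → Bool, g x) / 2 ^ n

/-- Variance on the discrete cube under the uniform measure. -/
noncomputable def varC {n : ℕ} (g : (Fin n → Bool) → ℝ) : ℝ :=
  EC (fun x => g x ^ 2) - (EC g) ^ 2

/-- `cubeFlip i x` is `x` with its `i`-th coordinate flipped. -/
def cubeFlip {n : ℕ} (i : Fin n) (x : Fin n → Bool) : Fin n → Bool :=
  Function.update x i (!x i)

/-- Discrete derivative along the `i`-th coordinate: `Dᵢ g (x) = g(τᵢ x) − g(x)`. -/
noncomputable def D {n : ℕ} (i : Fin n) (g : (Fin n → Bool) → ℝ) : (Fin n → Bool) → ℝ :=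
  fun x => g (cubeFlip i x) - g x

/-- `L^p(μⁿ)`-norm on the discrete cube. -/
noncomputable def normC {n : ℕ} (p : ℝ) (g : (Fin n → Bool) → ℝ) : ℝ :=
  (EC fun x => |g x| ^ p) ^ (1 / p)

open scoped symmDiff

namespace Tal
open Finset

variable {n : ℕ}

lemma EC_congr {f g : (Fin n → Bool) → ℝ} (h : ∀ x, f x = g x) : EC f = EC g := by
  unfold EC; rw [funext h]

lemma EC_add (f g : (Fin n → Bool) → ℝ) :
    EC (fun x => f x + g x) = EC f + EC g := by
  unfold EC; rw [Finset.sum_add_distrib, add_div]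

lemma EC_const_mul (c : ℝ) (f : (Fin n → Bool) → ℝ) :
    EC (fun x => c * f x) = c * EC f := by
  unfold EC; rw [← Finset.mul_sum, mul_div_assoc]

lemma EC_sum {ι : Type*} (A : Finset ι) (F : ι → (Fin n → Bool) → ℝ) :
    EC (fun x => ∑ s ∈ A, F s x) = ∑ s ∈ A, EC (F s) := by
  unfold EC; rw [Finset.sum_comm, Finset.sum_div]

lemma EC_mono {f g : (Fin n → Bool) → ℝ} (h : ∀ x, f x ≤ g x) : EC f ≤ EC g := by
  unfold EC
  apply div_le_div_of_nonneg_right (Finset.sum_le_sum fun x _ => h x)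
  positivity

lemma EC_nonneg {f : (Fin n → Bool) → ℝ} (h : ∀ x, 0 ≤ f x) : 0 ≤ EC f := by
  have : EC (fun _ : Fin n → Bool => (0:ℝ)) ≤ EC f := EC_mono h
  simpa [EC] using this

lemma card_cube : (Fintype.card (Fin n → Bool)) = 2 ^ n := by simp

lemma EC_const (c : ℝ) : EC (fun _ : Fin n → Bool => c) = c := by
  unfold EC
  rw [Finset.sum_const, Finset.card_univ, card_cube, nsmul_eq_mul]
  field_simp
  push_cast; ring

lemma EC_reindex (e : (Fin n → Bool) ≃ (Fin n → Bool)) (g : (Fin n → Bool) → ℝ) :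
    EC (fun x => g (e x)) = EC g := by
  unfold EC
  congr 1
  exact Fintype.sum_equiv e _ _ (fun x => rfl)

/-- sign of a boolean, as ±1 -/
def sgn (b : Bool) : ℝ := if b then 1 else -1

lemma sgn_not (b : Bool) : sgn (!b) = -sgn b := by cases b <;> simp [sgn]

lemma sgn_mul_self (b : Bool) : sgn b * sgn b = 1 := by cases b <;> norm_num [sgn]

lemma flip_flip (i : Fin n) (x : Fin n → Bool) : cubeFlip i (cubeFlip i x) = x := by
  funext j
  by_cases h : j = i
  · subst h; simp [cubeFlip]
  · simp [cubeFlip, Function.update_of_ne h]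

lemma flip_apply_self (i : Fin n) (x : Fin n → Bool) : cubeFlip i x i = !x i := by
  simp [cubeFlip]

lemma flip_apply_ne (i : Fin n) {j : Fin n} (h : j ≠ i) (x : Fin n → Bool) :
    cubeFlip i x j = x j := by
  simp [cubeFlip, Function.update_of_ne h]

/-- the flip as an equivalence -/
def flipEquiv (i : Fin n) : (Fin n → Bool) ≃ (Fin n → Bool) :=
  ⟨cubeFlip i, cubeFlip i, flip_flip i, flip_flip i⟩

/-- Walsh character -/
noncomputable def chi (S : Finset (Fin n)) (x : Fin n → Bool) : ℝ :=
  ∏ j ∈ S, sgn (x j)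

lemma chi_empty (x : Fin n → Bool) : chi ∅ x = 1 := by simp [chi]

lemma chi_singleton (i : Fin n) (x : Fin n → Bool) : chi {i} x = sgn (x i) := by
  simp [chi]

lemma chi_flip (S : Finset (Fin n)) (i : Fin n) (x : Fin n → Bool) :
    chi S (cubeFlip i x) = (if i ∈ S then -1 else 1) * chi S x := by
  by_cases h : i ∈ S
  · rw [if_pos h]
    rw [chi, ← Finset.mul_prod_erase _ _ h, chi, ← Finset.mul_prod_erase _ _ h]
    have h1 : ∏ j ∈ S.erase i, sgn (cubeFlip i x j) = ∏ j ∈ S.erase i, sgn (x j) :=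
      Finset.prod_congr rfl fun j hj => by rw [flip_apply_ne i (Finset.ne_of_mem_erase hj) x]
    rw [h1, flip_apply_self, sgn_not]
    ring
  · rw [if_neg h, one_mul]
    exact Finset.prod_congr rfl fun j hj => by
      rw [flip_apply_ne i (fun hji => h (hji ▸ hj)) x]

lemma chi_mul_self (S : Finset (Fin n)) (x : Fin n → Bool) : chi S x * chi S x = 1 := by
  rw [chi, ← Finset.prod_mul_distrib]
  exact Finset.prod_eq_one fun j _ => sgn_mul_self (x j)

lemma chi_mul (S T : Finset (Fin n)) (x : Fin n → Bool) :
    chi S x * chi T x = chi (S ∆ T) x := by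
  have hS : chi S x = chi (S \ T) x * chi (S ∩ T) x := by
    rw [chi, chi, chi, ← Finset.prod_union (Finset.disjoint_sdiff_inter S T),
      Finset.sdiff_union_inter]
  have hT : chi T x = chi (T \ S) x * chi (S ∩ T) x := by
    rw [chi, chi, chi, Finset.inter_comm, ← Finset.prod_union (Finset.disjoint_sdiff_inter T S),
      Finset.sdiff_union_inter]
  have hsymm : chi (S ∆ T) x = chi (S \ T) x * chi (T \ S) x := by
    rw [symmDiff_def, chi, chi, chi, ← Finset.prod_union disjoint_sdiff_sdiff]
    rfl
  rw [hS, hT, hsymm]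
  have h2 := chi_mul_self (S ∩ T) x
  linear_combination (chi (S \ T) x * chi (T \ S) x) * h2

lemma EC_chi (S : Finset (Fin n)) : EC (chi S) = if S = ∅ then 1 else 0 := by
  by_cases h : S = ∅
  · subst h; rw [if_pos rfl]
    rw [EC_congr (fun x => chi_empty x)]
    exact EC_const 1
  · rw [if_neg h]
    obtain ⟨i, hi⟩ := Finset.nonempty_iff_ne_empty.mpr h
    have h1 : EC (chi S) = EC (fun x => chi S (cubeFlip i x)) :=
      (EC_reindex (flipEquiv i) (chi S)).symm
    have h2 : EC (fun x => chi S (cubeFlip i x)) = - EC (chi S) := by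
      rw [EC_congr (fun x => by rw [chi_flip S i x, if_pos hi])]
      have := EC_const_mul (-1) (chi S)
      simpa using this
    linarith [h1, h2]

lemma ortho (S T : Finset (Fin n)) :
    EC (fun x => chi S x * chi T x) = if S = T then 1 else 0 := by
  rw [EC_congr (fun x => chi_mul S T x), EC_chi]
  by_cases h : S = T
  · simp [h, symmDiff_self, Finset.bot_eq_empty]
  · have h2 : S ∆ T ≠ ∅ := by
      rw [← Finset.bot_eq_empty, ne_eq, symmDiff_eq_bot]
      exact h
    simp [h, h2]

lemma kernel (x y : Fin n → Bool) :
    ∑ S : Finset (Fin n), chi S x * chi S y = if x = y then (2:ℝ)^n else 0 := by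
  have h1 : ∀ S : Finset (Fin n), chi S x * chi S y = ∏ j ∈ S, (sgn (x j) * sgn (y j)) := by
    intro S; rw [chi, chi, Finset.prod_mul_distrib]
  simp only [h1]
  have h2 := Finset.prod_add (fun j : Fin n => sgn (x j) * sgn (y j))
      (fun _ : Fin n => (1:ℝ)) Finset.univ
  simp only [Finset.prod_const_one, mul_one, Finset.powerset_univ] at h2
  by_cases h : x = y
  · subst h
    rw [if_pos rfl, ← h2]
    have : ∀ j : Fin n, sgn (x j) * sgn (x j) + 1 = 2 := fun j => by
      rw [sgn_mul_self]; norm_num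
    simp only [this, Finset.prod_const, Finset.card_univ, Fintype.card_fin]
  · rw [if_neg h, ← h2]
    obtain ⟨j, hj⟩ := Function.ne_iff.mp h
    apply Finset.prod_eq_zero (Finset.mem_univ j)
    have : sgn (x j) * sgn (y j) = -1 := by
      cases hxj : x j <;> cases hyj : y j <;> simp_all [sgn]
    rw [this]; ring

/-- Fourier coefficient -/
noncomputable def fc (f : (Fin n → Bool) → ℝ) (S : Finset (Fin n)) : ℝ :=
  EC (fun x => f x * chi S x)

lemma expansion (f : (Fin n → Bool) → ℝ) (y : Fin n → Bool) :
    ∑ S : Finset (Fin n), fc f S * chi S y = f y := by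
  have h1 : ∀ S : Finset (Fin n), fc f S * chi S y
      = EC (fun x => chi S y * (f x * chi S x)) := by
    intro S
    rw [EC_const_mul]
    unfold fc; ring
  rw [Finset.sum_congr rfl (fun S _ => h1 S), ← EC_sum]
  have h2 : ∀ x, (∑ S : Finset (Fin n), chi S y * (f x * chi S x))
      = f x * (if x = y then (2:ℝ)^n else 0) := by
    intro x
    rw [← kernel x y, Finset.mul_sum]
    exact Finset.sum_congr rfl fun S _ => by ring
  rw [EC_congr h2]
  unfold EC
  simp only [mul_ite, mul_zero]
  rw [Finset.sum_ite_eq' Finset.univ y (fun x => f x * 2^n), if_pos (Finset.mem_univ y)]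
  field_simp

lemma parseval (f g : (Fin n → Bool) → ℝ) :
    ∑ S : Finset (Fin n), fc f S * fc g S = EC (fun x => f x * g x) := by
  have h1 : ∀ S : Finset (Fin n), fc f S * fc g S
      = EC (fun y => (fc f S * chi S y) * g y) := by
    intro S
    have : ∀ y, (fc f S * chi S y) * g y = fc f S * (g y * chi S y) := fun y => by ring
    rw [EC_congr this, EC_const_mul]
    rfl
  rw [Finset.sum_congr rfl (fun S _ => h1 S), ← EC_sum]
  apply EC_congr
  intro y
  rw [← Finset.sum_mul, expansion]

/-- invariance under the `i`-th flip -/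
def inv (i : Fin n) (f : (Fin n → Bool) → ℝ) : Prop := ∀ x, f (cubeFlip i x) = f x

lemma fc_flip (f : (Fin n → Bool) → ℝ) (i : Fin n) (S : Finset (Fin n)) :
    fc (fun x => f (cubeFlip i x)) S = (if i ∈ S then -1 else 1) * fc f S := by
  have h1 : fc (fun x => f (cubeFlip i x)) S
      = EC (fun x => f x * chi S (cubeFlip i x)) := by
    unfold fc
    have := EC_reindex (flipEquiv i) (fun y => f y * chi S (cubeFlip i y))
    rw [← this]
    apply EC_congr
    intro x
    show f (cubeFlip i x) * chi S x
      = f (cubeFlip i x) * chi S (cubeFlip i (cubeFlip i x))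
    rw [flip_flip]
  rw [h1]
  have h2 : ∀ x, f x * chi S (cubeFlip i x)
      = (if i ∈ S then (-1:ℝ) else 1) * (f x * chi S x) := by
    intro x; rw [chi_flip]; ring
  rw [EC_congr h2, EC_const_mul]
  rfl

lemma fc_inv {f : (Fin n → Bool) → ℝ} {i : Fin n} (h : inv i f) {S : Finset (Fin n)}
    (hi : i ∈ S) : fc f S = 0 := by
  have h1 := fc_flip f i S
  rw [if_pos hi] at h1
  have h2 : fc (fun x => f (cubeFlip i x)) S = fc f S := by
    unfold fc; exact EC_congr fun x => congrArg (· * chi S x) (h x)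
  rw [h2] at h1
  linarith

lemma EC_sgn_inv {m : (Fin n → Bool) → ℝ} {i : Fin n} (h : inv i m) :
    EC (fun x => sgn (x i) * m x) = 0 := by
  have h1 : EC (fun x => sgn (x i) * m x) = fc m {i} := by
    unfold fc
    apply EC_congr
    intro x
    rw [chi_singleton]; ring
  rw [h1]
  exact fc_inv h (Finset.mem_singleton_self i)

/-- noise operator, defined spectrally -/
noncomputable def T (σ : ℝ) (f : (Fin n → Bool) → ℝ) : (Fin n → Bool) → ℝ :=
  fun x => ∑ S : Finset (Fin n), σ ^ S.card * fc f S * chi S x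

lemma fc_T (σ : ℝ) (f : (Fin n → Bool) → ℝ) (S : Finset (Fin n)) :
    fc (T σ f) S = σ ^ S.card * fc f S := by
  unfold fc T
  have h1 : ∀ x, (∑ U : Finset (Fin n), σ ^ U.card * fc f U * chi U x) * chi S x
      = ∑ U : Finset (Fin n), (σ ^ U.card * fc f U) * (chi U x * chi S x) := by
    intro x
    rw [Finset.sum_mul]
    exact Finset.sum_congr rfl fun U _ => by ring
  rw [EC_congr h1, EC_sum]
  have h2 : ∀ U : Finset (Fin n),
      EC (fun x => (σ ^ U.card * fc f U) * (chi U x * chi S x))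
      = (σ ^ U.card * fc f U) * (if U = S then 1 else 0) := by
    intro U
    rw [EC_const_mul, ortho]
  rw [Finset.sum_congr rfl (fun U _ => h2 U)]
  simp only [mul_ite, mul_one, mul_zero]
  rw [Finset.sum_ite_eq' Finset.univ S (fun U => σ ^ U.card * fc f U),
    if_pos (Finset.mem_univ S)]
  rfl

lemma EC_mul_T (σ : ℝ) (g : (Fin n → Bool) → ℝ) :
    EC (fun x => g x * T σ g x) = ∑ S : Finset (Fin n), σ ^ S.card * (fc g S)^2 := by
  rw [← parseval]
  exact Finset.sum_congr rfl fun S _ => by rw [fc_T]; ring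

lemma T_inv {f : (Fin n → Bool) → ℝ} {i : Fin n} (h : inv i f) (σ : ℝ) :
    inv i (T σ f) := by
  intro x
  unfold T
  apply Finset.sum_congr rfl
  intro S _
  by_cases hi : i ∈ S
  · rw [fc_inv h hi]; ring
  · rw [chi_flip, if_neg hi, one_mul]

lemma chi_insert {i : Fin n} {S : Finset (Fin n)} (h : i ∉ S) (x : Fin n → Bool) :
    chi (insert i S) x = sgn (x i) * chi S x := Finset.prod_insert h

lemma chi_erase {i : Fin n} {S : Finset (Fin n)} (h : i ∈ S) (x : Fin n → Bool) :
    chi S x = sgn (x i) * chi (S.erase i) x := (Finset.mul_prod_erase S _ h).symm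

lemma flip_comm {i j : Fin n} (h : i ≠ j) (x : Fin n → Bool) :
    cubeFlip i (cubeFlip j x) = cubeFlip j (cubeFlip i x) := by
  unfold cubeFlip
  rw [Function.update_of_ne h (!x j) x, Function.update_of_ne h.symm (!x i) x]
  exact Function.update_comm h.symm _ _ _

/-- even part w.r.t. coordinate `i` -/
noncomputable def ev (i : Fin n) (f : (Fin n → Bool) → ℝ) : (Fin n → Bool) → ℝ :=
  fun x => (f x + f (cubeFlip i x)) / 2

/-- odd part w.r.t. coordinate `i` (with the sign removed) -/
noncomputable def od (i : Fin n) (f : (Fin n → Bool) → ℝ) : (Fin n → Bool) → ℝ :=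
  fun x => sgn (x i) * (f x - f (cubeFlip i x)) / 2

lemma inv_ev (i : Fin n) (f : (Fin n → Bool) → ℝ) : inv i (ev i f) := by
  intro x; unfold ev; rw [flip_flip]; ring

lemma inv_od (i : Fin n) (f : (Fin n → Bool) → ℝ) : inv i (od i f) := by
  intro x; unfold od
  rw [flip_flip, flip_apply_self, sgn_not]
  ring

lemma inv_ev_of {i j : Fin n} (hij : j ≠ i) {f : (Fin n → Bool) → ℝ} (h : inv j f) :
    inv j (ev i f) := by
  intro x; unfold ev
  rw [flip_comm (Ne.symm hij), h, h]

lemma inv_od_of {i j : Fin n} (hij : j ≠ i) {f : (Fin n → Bool) → ℝ} (h : inv j f) :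
    inv j (od i f) := by
  intro x; unfold od
  rw [flip_comm (Ne.symm hij), h, h, flip_apply_ne j (Ne.symm hij)]

lemma ev_od_decomp (i : Fin n) (f : (Fin n → Bool) → ℝ) (x : Fin n → Bool) :
    f x = ev i f x + sgn (x i) * od i f x := by
  unfold ev od
  have hs := sgn_mul_self (x i)
  have : sgn (x i) * (sgn (x i) * (f x - f (cubeFlip i x)) / 2)
      = (f x - f (cubeFlip i x)) / 2 := by
    field_simp
    linear_combination (f x - f (cubeFlip i x)) * hs
  rw [this]; ring

lemma EC_sq_decomp (i : Fin n) (f : (Fin n → Bool) → ℝ) :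
    EC (fun x => f x ^ 2) = EC (fun x => ev i f x ^ 2) + EC (fun x => od i f x ^ 2) := by
  have h1 : ∀ x, f x ^ 2 = (ev i f x ^ 2 + od i f x ^ 2)
      + sgn (x i) * (2 * (ev i f x * od i f x)) := by
    intro x
    rw [ev_od_decomp i f x]
    have hs := sgn_mul_self (x i)
    ring_nf
    nlinarith [hs]
  rw [EC_congr h1, EC_add, EC_add]
  have h2 : EC (fun x => sgn (x i) * (2 * (ev i f x * od i f x))) = 0 := by
    apply EC_sgn_inv
    intro x
    show 2 * (ev i f (cubeFlip i x) * od i f (cubeFlip i x)) = 2 * (ev i f x * od i f x)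
    rw [inv_ev i f x, inv_od i f x]
  rw [h2, add_zero]

lemma EC_CS (u v : (Fin n → Bool) → ℝ) :
    EC (fun x => u x * v x)
      ≤ Real.sqrt (EC (fun x => u x ^ 2)) * Real.sqrt (EC (fun x => v x ^ 2)) := by
  unfold EC
  have h := Real.sum_mul_le_sqrt_mul_sqrt Finset.univ u v
  have h2 : Real.sqrt ((∑ x : Fin n → Bool, u x ^ 2) / 2 ^ n)
        * Real.sqrt ((∑ x : Fin n → Bool, v x ^ 2) / 2 ^ n)
      = Real.sqrt (∑ x : Fin n → Bool, u x ^ 2)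
        * Real.sqrt (∑ x : Fin n → Bool, v x ^ 2) / 2 ^ n := by
    rw [Real.sqrt_div (Finset.sum_nonneg fun x _ => sq_nonneg (u x)),
        Real.sqrt_div (Finset.sum_nonneg fun x _ => sq_nonneg (v x)),
        div_mul_div_comm, Real.mul_self_sqrt (by positivity)]
  rw [h2]
  apply div_le_div_of_nonneg_right h
  positivity

lemma T_decomp (σ : ℝ) (f : (Fin n → Bool) → ℝ) (i : Fin n) (x : Fin n → Bool) :
    T σ f x = T σ (ev i f) x + σ * (sgn (x i) * T σ (od i f) x) := by
  have h_fc : ∀ S : Finset (Fin n), fc f S = fc (ev i f) S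
      + EC (fun y => (sgn (y i) * od i f y) * chi S y) := by
    intro S
    unfold fc
    rw [← EC_add]
    apply EC_congr
    intro y
    rw [ev_od_decomp i f y]
    ring
  have hq : ∀ S : Finset (Fin n), EC (fun y => (sgn (y i) * od i f y) * chi S y)
      = if i ∈ S then fc (od i f) (S.erase i) else 0 := by
    intro S
    by_cases hi : i ∈ S
    · rw [if_pos hi]
      have : ∀ y, (sgn (y i) * od i f y) * chi S y = od i f y * chi (S.erase i) y := by
        intro y
        rw [chi_erase hi]
        have hs := sgn_mul_self (y i)
        linear_combination (od i f y * chi (S.erase i) y) * hs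
      rw [EC_congr this]
      rfl
    · rw [if_neg hi]
      have hassoc : ∀ y, (sgn (y i) * od i f y) * chi S y
          = sgn (y i) * (od i f y * chi S y) := fun y => by ring
      rw [EC_congr hassoc]
      apply EC_sgn_inv
      intro y
      show od i f (cubeFlip i y) * chi S (cubeFlip i y) = od i f y * chi S y
      rw [inv_od i f y, chi_flip, if_neg hi, one_mul]
  -- reindexing for the odd part
  have minv : Function.Involutive
      (fun S : Finset (Fin n) => if i ∈ S then S.erase i else insert i S) := by
    intro S
    by_cases h : i ∈ S
    · simp only [if_pos h, if_neg (Finset.notMem_erase i S)]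
      exact Finset.insert_erase h
    · simp only [if_neg h, if_pos (Finset.mem_insert_self i S)]
      exact Finset.erase_insert h
  have hR : (∑ S : Finset (Fin n),
        σ ^ S.card * (if i ∈ S then fc (od i f) (S.erase i) else 0) * chi S x)
      = σ * (sgn (x i) * T σ (od i f) x) := by
    rw [show σ * (sgn (x i) * T σ (od i f) x)
        = ∑ S : Finset (Fin n),
            σ * (sgn (x i) * (σ ^ S.card * fc (od i f) S * chi S x)) by
      unfold T; rw [Finset.mul_sum, Finset.mul_sum]]
    symm
    apply Fintype.sum_equiv minv.toPerm
    intro S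
    show σ * (sgn (x i) * (σ ^ S.card * fc (od i f) S * chi S x))
      = σ ^ (if i ∈ S then S.erase i else insert i S).card
        * (if i ∈ (if i ∈ S then S.erase i else insert i S)
            then fc (od i f) ((if i ∈ S then S.erase i else insert i S).erase i) else 0)
        * chi (if i ∈ S then S.erase i else insert i S) x
    by_cases h : i ∈ S
    · rw [fc_inv (inv_od i f) h]
      simp only [if_pos h, if_neg (Finset.notMem_erase i S)]
      ring
    · simp only [if_neg h, if_pos (Finset.mem_insert_self i S), Finset.erase_insert h,
        Finset.card_insert_of_notMem h, chi_insert h]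
      rw [pow_succ]
      ring
  calc T σ f x
      = ∑ S : Finset (Fin n), (σ ^ S.card * fc (ev i f) S * chi S x
          + σ ^ S.card * (if i ∈ S then fc (od i f) (S.erase i) else 0) * chi S x) := by
        unfold T
        apply Finset.sum_congr rfl
        intro S _
        rw [h_fc S, hq S]
        ring
    _ = (∑ S : Finset (Fin n), σ ^ S.card * fc (ev i f) S * chi S x)
        + ∑ S : Finset (Fin n),
            σ ^ S.card * (if i ∈ S then fc (od i f) (S.erase i) else 0) * chi S x :=
        Finset.sum_add_distrib
    _ = T σ (ev i f) x + σ * (sgn (x i) * T σ (od i f) x) := by rw [hR]; rfl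

lemma quartic {A B : (Fin n → Bool) → ℝ} {i : Fin n} (hA : inv i A) (hB : inv i B) (c : ℝ) :
    EC (fun x => (A x + c * (sgn (x i) * B x)) ^ 4)
      = EC (fun x => A x ^ 4) + 6 * c ^ 2 * EC (fun x => A x ^ 2 * B x ^ 2)
        + c ^ 4 * EC (fun x => B x ^ 4) := by
  have h1 : ∀ x, (A x + c * (sgn (x i) * B x)) ^ 4
      = (A x ^ 4 + (6 * c ^ 2) * (A x ^ 2 * B x ^ 2) + (c ^ 4) * B x ^ 4)
        + sgn (x i) * (4 * c * (A x ^ 3 * B x) + 4 * c ^ 3 * (A x * B x ^ 3)) := by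
    intro x
    have hst : sgn true = 1 := rfl
    have hsf : sgn false = -1 := rfl
    cases hb : x i
    · rw [hsf]; ring
    · rw [hst]; ring
  rw [EC_congr h1, EC_add]
  have h2 : EC (fun x => sgn (x i)
      * (4 * c * (A x ^ 3 * B x) + 4 * c ^ 3 * (A x * B x ^ 3))) = 0 := by
    apply EC_sgn_inv
    intro x
    show 4 * c * (A (cubeFlip i x) ^ 3 * B (cubeFlip i x))
        + 4 * c ^ 3 * (A (cubeFlip i x) * B (cubeFlip i x) ^ 3) = _
    rw [hA x, hB x]
  rw [h2, add_zero, EC_add, EC_add, EC_const_mul, EC_const_mul]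

lemma const_of_inv {f : (Fin n → Bool) → ℝ} (hinv : ∀ j, inv j f) (x : Fin n → Bool) :
    f x = f (fun _ => true) := by
  have aux : ∀ s : Finset (Fin n), ∀ x : Fin n → Bool,
      (∀ j, j ∉ s → x j = true) → f x = f (fun _ => true) := by
    intro s
    induction s using Finset.induction_on with
    | empty =>
      intro x hx
      congr 1
      funext j
      exact hx j (by simp)
    | @insert a s' hni ih =>
      intro x hx
      by_cases hxa : x a = true
      · apply ih
        intro j hj
        by_cases hja : j = a
        · subst hja; exact hxa
        · exact hx j (by simp [hja, hj])
      · have h1 : f x = f (cubeFlip a x) := (hinv a x).symm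
        rw [h1]
        apply ih
        intro j hj
        by_cases hja : j = a
        · subst hja
          rw [flip_apply_self]
          simp only [Bool.not_eq_true] at hxa
          simp [hxa]
        · rw [flip_apply_ne a hja]
          exact hx j (by simp [hja, hj])
  exact aux Finset.univ x (fun j hj => absurd (Finset.mem_univ j) hj)

/-- 2 → 4 hypercontractivity for the noise operator. -/
lemma hyper (σ : ℝ) (hσ : σ ^ 2 ≤ 1/3) (J : Finset (Fin n)) (f : (Fin n → Bool) → ℝ)
    (hf : ∀ j, j ∉ J → inv j f) :
    EC (fun x => (T σ f x) ^ 4) ≤ (EC (fun x => f x ^ 2)) ^ 2 := by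
  induction J using Finset.induction_on generalizing f with
  | empty =>
    have hc := const_of_inv (fun j => hf j (by simp))
    set c := f (fun _ => true) with hcdef
    have hfc : ∀ S : Finset (Fin n), fc f S = if S = ∅ then c else 0 := by
      intro S
      unfold fc
      rw [EC_congr (fun x => by rw [hc x] : ∀ x, f x * chi S x = c * chi S x),
        EC_const_mul, EC_chi]
      by_cases h : S = ∅ <;> simp [h]
    have hT : ∀ x, T σ f x = c := by
      intro x
      unfold T
      rw [Finset.sum_eq_single (∅ : Finset (Fin n))]
      · rw [hfc ∅, if_pos rfl, chi_empty]
        simp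
      · intro S _ hS
        rw [hfc S, if_neg hS]
        ring
      · intro h
        exact absurd (Finset.mem_univ _) h
    rw [EC_congr (fun x => by rw [hT x] : ∀ x, (T σ f x)^4 = c^4),
      EC_congr (fun x => by rw [hc x] : ∀ x, f x ^ 2 = c^2),
      EC_const, EC_const]
    exact le_of_eq (by ring)
  | @insert i J hiJ ih =>
    set e := ev i f
    set o := od i f
    have he : ∀ j, j ∉ J → inv j e := by
      intro j hj
      by_cases hji : j = i
      · subst hji; exact inv_ev _ f
      · exact inv_ev_of hji (hf j (by simp [hji, hj]))
    have ho : ∀ j, j ∉ J → inv j o := by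
      intro j hj
      by_cases hji : j = i
      · subst hji; exact inv_od _ f
      · exact inv_od_of hji (hf j (by simp [hji, hj]))
    have hiA : inv i (T σ e) := T_inv (inv_ev i f) σ
    have hiB : inv i (T σ o) := T_inv (inv_od i f) σ
    have hq := quartic hiA hiB σ
    have hstep : EC (fun x => (T σ f x) ^ 4)
        = EC (fun x => (T σ e x) ^ 4) + 6 * σ ^ 2 * EC (fun x => (T σ e x) ^ 2 * (T σ o x) ^ 2)
          + σ ^ 4 * EC (fun x => (T σ o x) ^ 4) := by
      rw [← hq]
      exact EC_congr fun x => by rw [T_decomp σ f i x]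
    have h1 := ih e he
    have h2 := ih o ho
    have pe : (0:ℝ) ≤ EC (fun x => e x ^ 2) := EC_nonneg fun x => sq_nonneg _
    have po : (0:ℝ) ≤ EC (fun x => o x ^ 2) := EC_nonneg fun x => sq_nonneg _
    have h3 : EC (fun x => (T σ e x) ^ 2 * (T σ o x) ^ 2)
        ≤ EC (fun x => e x ^ 2) * EC (fun x => o x ^ 2) := by
      have hcs := EC_CS (fun x => (T σ e x) ^ 2) (fun x => (T σ o x) ^ 2)
      have hre : EC (fun x => ((T σ e x) ^ 2) ^ 2) = EC (fun x => (T σ e x) ^ 4) :=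
        EC_congr fun x => by ring
      have hro : EC (fun x => ((T σ o x) ^ 2) ^ 2) = EC (fun x => (T σ o x) ^ 4) :=
        EC_congr fun x => by ring
      rw [hre, hro] at hcs
      refine hcs.trans ?_
      have se : Real.sqrt (EC fun x => (T σ e x) ^ 4) ≤ EC (fun x => e x ^ 2) := by
        have := Real.sqrt_le_sqrt h1
        rwa [Real.sqrt_sq pe] at this
      have so : Real.sqrt (EC fun x => (T σ o x) ^ 4) ≤ EC (fun x => o x ^ 2) := by
        have := Real.sqrt_le_sqrt h2
        rwa [Real.sqrt_sq po] at this
      exact mul_le_mul se so (Real.sqrt_nonneg _) pe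
    have pcs : (0:ℝ) ≤ EC (fun x => (T σ e x) ^ 2 * (T σ o x) ^ 2) :=
      EC_nonneg fun x => mul_nonneg (sq_nonneg _) (sq_nonneg _)
    have po4 : (0:ℝ) ≤ EC (fun x => (T σ o x) ^ 4) :=
      EC_nonneg fun x => by positivity
    have hs2 : (0:ℝ) ≤ σ ^ 2 := sq_nonneg σ
    have hs4 : σ ^ 4 ≤ 1/9 := by nlinarith [hs2, hσ]
    rw [hstep, EC_sq_decomp i f]
    show _ ≤ (EC (fun x => e x ^ 2) + EC (fun x => o x ^ 2)) ^ 2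
    have step1 : EC (fun x => (T σ e x) ^ 4)
          + 6 * σ ^ 2 * EC (fun x => (T σ e x) ^ 2 * (T σ o x) ^ 2)
          + σ ^ 4 * EC (fun x => (T σ o x) ^ 4)
        ≤ (EC (fun x => e x ^ 2)) ^ 2
          + 6 * σ ^ 2 * ((EC (fun x => e x ^ 2)) * EC (fun x => o x ^ 2))
          + σ ^ 4 * (EC (fun x => o x ^ 2)) ^ 2 := by
      refine add_le_add (add_le_add h1 ?_) ?_
      · exact mul_le_mul_of_nonneg_left h3 (by positivity)
      · exact mul_le_mul_of_nonneg_left h2 (by positivity)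
    refine step1.trans ?_
    nlinarith [mul_nonneg pe po, sq_nonneg (EC (fun x => o x ^ 2)), hσ, hs4, hs2]

lemma chain (g : (Fin n → Bool) → ℝ) :
    ∑ S : Finset (Fin n), (1/2:ℝ) ^ S.card * (fc g S) ^ 2
      ≤ Real.sqrt (EC (fun x => |g x|))
        * (Real.sqrt (Real.sqrt (EC (fun x => g x ^ 2)))
            * Real.sqrt (EC (fun x => g x ^ 2))) := by
  set Q := EC (fun x => g x ^ 2) with hQdef
  have hQ0 : 0 ≤ Q := EC_nonneg fun x => sq_nonneg _
  have e1 : ∑ S : Finset (Fin n), (1/2:ℝ) ^ S.card * (fc g S) ^ 2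
      = EC (fun x => g x * T (1/2) g x) := (EC_mul_T (1/2) g).symm
  have e2 : EC (fun x => g x * T (1/2) g x) ≤ EC (fun x => |g x| * |T (1/2) g x|) :=
    EC_mono fun x => by rw [← abs_mul]; exact le_abs_self _
  have e3 : EC (fun x => |g x| * |T (1/2) g x|)
      ≤ Real.sqrt (EC (fun x => |g x|))
        * Real.sqrt (EC (fun x => |g x| * (T (1/2) g x) ^ 2)) := by
    have hcs := EC_CS (fun x => Real.sqrt |g x|) (fun x => Real.sqrt |g x| * |T (1/2) g x|)
    have r1 : EC (fun x => Real.sqrt |g x| * (Real.sqrt |g x| * |T (1/2) g x|))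
        = EC (fun x => |g x| * |T (1/2) g x|) := by
      apply EC_congr
      intro x
      rw [← mul_assoc, Real.mul_self_sqrt (abs_nonneg _)]
    have r2 : EC (fun x => Real.sqrt |g x| ^ 2) = EC (fun x => |g x|) := by
      apply EC_congr
      intro x
      rw [Real.sq_sqrt (abs_nonneg _)]
    have r3 : EC (fun x => (Real.sqrt |g x| * |T (1/2) g x|) ^ 2)
        = EC (fun x => |g x| * (T (1/2) g x) ^ 2) := by
      apply EC_congr
      intro x
      rw [mul_pow, Real.sq_sqrt (abs_nonneg _), sq_abs]
    rw [r1, r2, r3] at hcs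
    exact hcs
  have e4 : EC (fun x => |g x| * (T (1/2) g x) ^ 2)
      ≤ Real.sqrt Q * Real.sqrt (EC (fun x => (T (1/2) g x) ^ 4)) := by
    have hcs := EC_CS (fun x => |g x|) (fun x => (T (1/2) g x) ^ 2)
    have r1 : EC (fun x => |g x| ^ 2) = Q := EC_congr fun x => sq_abs _
    have r2 : EC (fun x => ((T (1/2) g x) ^ 2) ^ 2) = EC (fun x => (T (1/2) g x) ^ 4) :=
      EC_congr fun x => by ring
    rw [r1, r2] at hcs
    exact hcs
  have e5 : EC (fun x => (T (1/2) g x) ^ 4) ≤ Q ^ 2 :=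
    hyper (1/2) (by norm_num) Finset.univ g (fun j hj => absurd (Finset.mem_univ j) hj)
  have e6 : EC (fun x => |g x| * (T (1/2) g x) ^ 2) ≤ Real.sqrt Q * Q := by
    refine e4.trans ?_
    have : Real.sqrt (EC (fun x => (T (1/2) g x) ^ 4)) ≤ Q := by
      have := Real.sqrt_le_sqrt e5
      rwa [Real.sqrt_sq hQ0] at this
    exact mul_le_mul_of_nonneg_left this (Real.sqrt_nonneg _)
  have e7 : Real.sqrt (EC (fun x => |g x| * (T (1/2) g x) ^ 2))
      ≤ Real.sqrt (Real.sqrt Q) * Real.sqrt Q := by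
    have := Real.sqrt_le_sqrt e6
    rwa [Real.sqrt_mul (Real.sqrt_nonneg Q) Q] at this
  calc ∑ S : Finset (Fin n), (1/2:ℝ) ^ S.card * (fc g S) ^ 2
      = EC (fun x => g x * T (1/2) g x) := e1
    _ ≤ EC (fun x => |g x| * |T (1/2) g x|) := e2
    _ ≤ Real.sqrt (EC (fun x => |g x|))
        * Real.sqrt (EC (fun x => |g x| * (T (1/2) g x) ^ 2)) := e3
    _ ≤ Real.sqrt (EC (fun x => |g x|))
        * (Real.sqrt (Real.sqrt Q) * Real.sqrt Q) :=
      mul_le_mul_of_nonneg_left e7 (Real.sqrt_nonneg _)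

/-- The core real-analysis estimate. -/
lemma core {α : Type*} [Fintype α] (b : α → ℝ) (c : α → ℕ) (L M : ℝ)
    (hb : ∀ a, 0 ≤ b a) (hc : ∀ a, b a ≠ 0 → 1 ≤ c a) (hL : 0 < L) (hLM : L ≤ M)
    (hsum : ∑ a : α, b a ≤ M ^ 2)
    (hhyp : ∑ a : α, b a * (1/2:ℝ) ^ (c a) ≤ Real.sqrt L * (Real.sqrt M * M)) :
    ∑ a : α, b a / (c a : ℝ) ≤ 13 * (M ^ 2 / (1 + Real.log (M / L))) := by
  have hM : 0 < M := lt_of_lt_of_le hL hLM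
  set u := Real.log (M / L) with hu
  have hu0 : 0 ≤ u := Real.log_nonneg ((one_le_div hL).mpr hLM)
  have hden : (0:ℝ) < 1 + u := by linarith
  have hM2 : (0:ℝ) ≤ M ^ 2 := sq_nonneg M
  -- rewrite the hypercontractive bound
  have hLM2 : Real.sqrt L * (Real.sqrt M * M) = M ^ 2 * Real.exp (-u / 2) := by
    have hexp : Real.exp u = M / L := Real.exp_log (div_pos hM hL)
    have hLe : L = M * Real.exp (-u) := by
      rw [Real.exp_neg, hexp]
      field_simp
    have hsqL : Real.sqrt L = Real.sqrt M * Real.exp (-u / 2) := by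
      rw [hLe, show Real.exp (-u) = Real.exp (-u / 2) ^ 2 by
        rw [← Real.exp_nat_mul]; congr 1; push_cast; ring,
        Real.sqrt_mul hM.le, Real.sqrt_sq (Real.exp_nonneg _)]
    calc Real.sqrt L * (Real.sqrt M * M)
        = (Real.sqrt M * Real.sqrt M) * (M * Real.exp (-u / 2)) := by rw [hsqL]; ring
      _ = M ^ 2 * Real.exp (-u / 2) := by rw [Real.mul_self_sqrt hM.le]; ring
  -- choice of the cutoff level
  have hlog2 : (0:ℝ) < Real.log 2 := Real.log_pos (by norm_num)
  set k0 := Nat.floor (u / (4 * Real.log 2)) with hk0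
  set K := k0 + 1 with hK
  have hKpos : (0:ℝ) < (K : ℝ) := by positivity
  have h2K : (2:ℝ) ^ K ≤ 2 * Real.exp (u / 4) := by
    have hfloor : (k0 : ℝ) ≤ u / (4 * Real.log 2) :=
      Nat.floor_le (div_nonneg hu0 (by positivity))
    have hmul : (k0 : ℝ) * Real.log 2 ≤ u / 4 := by
      have := mul_le_mul_of_nonneg_right hfloor hlog2.le
      rwa [div_mul_eq_mul_div, mul_div_mul_right u 4 (ne_of_gt hlog2)] at this
    have hpow : (2:ℝ) ^ k0 = Real.exp ((k0 : ℝ) * Real.log 2) := by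
      rw [Real.exp_nat_mul, Real.exp_log (by norm_num : (0:ℝ) < 2)]
    calc (2:ℝ) ^ K = 2 * (2:ℝ) ^ k0 := by rw [hK, pow_succ]; ring
      _ = 2 * Real.exp ((k0 : ℝ) * Real.log 2) := by rw [hpow]
      _ ≤ 2 * Real.exp (u / 4) := by
          have := Real.exp_le_exp.mpr hmul
          linarith
  have hK4 : u ≤ 4 * (K : ℝ) := by
    have hlt : u / (4 * Real.log 2) < (k0 : ℝ) + 1 := Nat.lt_floor_add_one _
    have hl1 : Real.log 2 ≤ 1 := by
      have := Real.log_le_sub_one_of_pos (by norm_num : (0:ℝ) < 2)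
      linarith
    have h4l : (0:ℝ) < 4 * Real.log 2 := by positivity
    have : u < ((k0 : ℝ) + 1) * (4 * Real.log 2) := by
      rw [div_lt_iff₀ h4l] at hlt
      exact hlt
    have hcast : ((K : ℕ) : ℝ) = (k0 : ℝ) + 1 := by rw [hK]; push_cast; ring
    rw [hcast]
    nlinarith [this, mul_le_mul_of_nonneg_left hl1
      (show (0:ℝ) ≤ 4 * ((k0:ℝ) + 1) by positivity)]
  -- pointwise bound
  have hterm : ∀ a : α, b a / (c a : ℝ)
      ≤ (2:ℝ) ^ K * (b a * (1/2:ℝ) ^ (c a)) + b a / (K : ℝ) := by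
    intro a
    by_cases hba : b a = 0
    · simp [hba]
    by_cases hcK : c a ≤ K
    · have h1 : b a / (c a : ℝ) ≤ b a := by
        apply div_le_self (hb a)
        exact_mod_cast hc a hba
      have h2 : b a ≤ (2:ℝ) ^ K * (b a * (1/2:ℝ) ^ (c a)) := by
        have hp : (2:ℝ) ^ (c a) ≤ (2:ℝ) ^ K :=
          pow_le_pow_right₀ (by norm_num) hcK
        have hhalf : (1/2:ℝ) ^ (c a) = ((2:ℝ) ^ (c a))⁻¹ := by
          rw [div_pow, one_pow, one_div]
        rw [hhalf]
        rw [show (2:ℝ) ^ K * (b a * ((2:ℝ) ^ (c a))⁻¹)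
            = b a * ((2:ℝ) ^ K / (2:ℝ) ^ (c a)) by ring]
        nth_rewrite 1 [show b a = b a * 1 by ring]
        apply mul_le_mul_of_nonneg_left _ (hb a)
        rw [le_div_iff₀ (by positivity)]
        linarith
      have h3 : (0:ℝ) ≤ b a / (K : ℝ) := div_nonneg (hb a) hKpos.le
      linarith
    · push_neg at hcK
      have h1 : b a / (c a : ℝ) ≤ b a / (K : ℝ) := by
        apply div_le_div_of_nonneg_left (hb a) hKpos
        exact_mod_cast hcK.le
      have h2 : (0:ℝ) ≤ (2:ℝ) ^ K * (b a * (1/2:ℝ) ^ (c a)) :=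
        mul_nonneg (by positivity) (mul_nonneg (hb a) (by positivity))
      linarith
  have hsum2 : ∑ a : α, b a / (c a : ℝ)
      ≤ (2:ℝ) ^ K * (∑ a : α, b a * (1/2:ℝ) ^ (c a)) + (∑ a : α, b a) / (K : ℝ) := by
    rw [Finset.mul_sum, Finset.sum_div, ← Finset.sum_add_distrib]
    exact Finset.sum_le_sum fun a _ => hterm a
  have hb1 : (2:ℝ) ^ K * (∑ a : α, b a * (1/2:ℝ) ^ (c a)) ≤ 8 * (M ^ 2 / (1 + u)) := by
    have s1 : (2:ℝ) ^ K * (∑ a : α, b a * (1/2:ℝ) ^ (c a))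
        ≤ (2 * Real.exp (u / 4)) * (M ^ 2 * Real.exp (-u / 2)) := by
      refine mul_le_mul h2K (hhyp.trans_eq hLM2) ?_ (by positivity)
      apply Finset.sum_nonneg
      intro a _
      exact mul_nonneg (hb a) (by positivity)
    refine s1.trans ?_
    have hexpc : Real.exp (u / 4) * Real.exp (-u / 2) = Real.exp (-u / 4) := by
      rw [← Real.exp_add]
      congr 1
      ring
    have hexpb : Real.exp (-u / 4) ≤ 4 / (1 + u) := by
      have h1 : 1 + u ≤ 4 * Real.exp (u / 4) := by
        have := Real.add_one_le_exp (u / 4)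
        linarith
      rw [le_div_iff₀ hden]
      have h2 : Real.exp (-u / 4) * Real.exp (u / 4) = 1 := by
        rw [← Real.exp_add, show -u/4 + u/4 = 0 by ring, Real.exp_zero]
      nlinarith [Real.exp_pos (-u / 4), mul_le_mul_of_nonneg_left h1 (Real.exp_pos (-u / 4)).le,
        h2]
    calc (2 * Real.exp (u / 4)) * (M ^ 2 * Real.exp (-u / 2))
        = 2 * M ^ 2 * (Real.exp (u / 4) * Real.exp (-u / 2)) := by ring
      _ = 2 * M ^ 2 * Real.exp (-u / 4) := by rw [hexpc]
      _ ≤ 2 * M ^ 2 * (4 / (1 + u)) := by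
          apply mul_le_mul_of_nonneg_left hexpb (by positivity)
      _ = 8 * (M ^ 2 / (1 + u)) := by ring
  have hK1 : (1:ℝ) ≤ (K : ℝ) := by
    rw [hK]; push_cast; linarith [Nat.cast_nonneg (α := ℝ) k0]
  have hb2 : (∑ a : α, b a) / (K : ℝ) ≤ 5 * (M ^ 2 / (1 + u)) := by
    have h1 : (∑ a : α, b a) / (K : ℝ) ≤ M ^ 2 / (K : ℝ) :=
      div_le_div_of_nonneg_right hsum hKpos.le
    refine h1.trans ?_
    rw [mul_div_assoc', div_le_div_iff₀ hKpos hden]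
    nlinarith [hM2, hK4, hK1]
  calc ∑ a : α, b a / (c a : ℝ)
      ≤ (2:ℝ) ^ K * (∑ a : α, b a * (1/2:ℝ) ^ (c a)) + (∑ a : α, b a) / (K : ℝ) := hsum2
    _ ≤ 8 * (M ^ 2 / (1 + u)) + 5 * (M ^ 2 / (1 + u)) := add_le_add hb1 hb2
    _ = 13 * (M ^ 2 / (1 + u)) := by ring

lemma EC_sub (f g : (Fin n → Bool) → ℝ) :
    EC (fun x => f x - g x) = EC f - EC g := by
  unfold EC
  rw [Finset.sum_sub_distrib, sub_div]

lemma fc_D (f : (Fin n → Bool) → ℝ) (i : Fin n) (S : Finset (Fin n)) :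
    fc (D i f) S = if i ∈ S then (-2) * fc f S else 0 := by
  have h1 : fc (D i f) S = fc (fun x => f (cubeFlip i x)) S - fc f S := by
    unfold fc
    rw [← EC_sub]
    apply EC_congr
    intro x
    show D i f x * chi S x = _
    unfold D
    ring
  rw [h1, fc_flip]
  by_cases h : i ∈ S
  · rw [if_pos h, if_pos h]; ring
  · rw [if_neg h, if_neg h]; ring

lemma varC_eq (f : (Fin n → Bool) → ℝ) :
    varC f = ∑ i : Fin n, ∑ S : Finset (Fin n),
      (if i ∈ S then fc f S ^ 2 / (S.card : ℝ) else 0) := by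
  rw [Finset.sum_comm]
  have hS : ∀ S : Finset (Fin n),
      (∑ i : Fin n, if i ∈ S then fc f S ^ 2 / (S.card : ℝ) else 0)
      = if S = ∅ then 0 else fc f S ^ 2 := by
    intro S
    rw [Finset.sum_ite_mem, Finset.univ_inter, Finset.sum_const]
    by_cases h : S = ∅
    · subst h; simp
    · rw [if_neg h]
      have hc : (S.card : ℝ) ≠ 0 := by
        simpa [Finset.card_eq_zero] using h
      rw [nsmul_eq_mul]
      field_simp
  rw [Finset.sum_congr rfl fun S _ => hS S]
  unfold varC
  have hP : EC (fun x => f x ^ 2) = ∑ S : Finset (Fin n), fc f S ^ 2 := by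
    rw [show (∑ S : Finset (Fin n), fc f S ^ 2)
        = ∑ S : Finset (Fin n), fc f S * fc f S from
      Finset.sum_congr rfl fun S _ => by ring]
    rw [parseval f f]
    exact EC_congr fun x => by ring
  have hE : EC f = fc f ∅ := by
    unfold fc
    exact (EC_congr fun x => by rw [chi_empty, mul_one]).symm
  rw [hP, hE]
  have h1 : ∑ S : Finset (Fin n), fc f S ^ 2
      = fc f ∅ ^ 2 + ∑ S ∈ Finset.univ.erase ∅, fc f S ^ 2 :=
    (Finset.add_sum_erase _ _ (Finset.mem_univ ∅)).symm
  have h2 : ∑ S : Finset (Fin n), (if S = ∅ then (0:ℝ) else fc f S ^ 2)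
      = (if (∅ : Finset (Fin n)) = ∅ then (0:ℝ) else fc f ∅ ^ 2)
        + ∑ S ∈ Finset.univ.erase ∅, (if S = ∅ then (0:ℝ) else fc f S ^ 2) :=
    (Finset.add_sum_erase _ _ (Finset.mem_univ ∅)).symm
  rw [h1, h2, if_pos rfl, zero_add,
    Finset.sum_congr rfl (fun S hS => if_neg (Finset.ne_of_mem_erase hS))]
  ring

lemma normC_two (g : (Fin n → Bool) → ℝ) :
    normC 2 g = Real.sqrt (EC fun x => g x ^ 2) := by
  unfold normC
  have h1 : (EC fun x => |g x| ^ (2:ℝ)) = EC fun x => g x ^ 2 := by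
    apply EC_congr
    intro x
    rw [show ((2:ℝ)) = ((2:ℕ):ℝ) by norm_num, Real.rpow_natCast, sq_abs]
  rw [h1, Real.sqrt_eq_rpow]

lemma normC_one (g : (Fin n → Bool) → ℝ) :
    normC 1 g = EC fun x => |g x| := by
  unfold normC
  norm_num [Real.rpow_one]

end Tal

/-- Talagrand's L¹–L² inequality on the discrete cube. -/
theorem talagrand_L1_L2 :
    ∃ C : ℝ, 0 < C ∧ ∀ n : ℕ, 1 ≤ n → ∀ f : (Fin n → Bool) → ℝ,
      varC f ≤ C * ∑ i : Fin n,
        if D i f = 0 then 0 else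
          (normC 2 (D i f)) ^ 2 /
            (1 + Real.log (normC 2 (D i f) / normC 1 (D i f))) := by
  refine ⟨16, by norm_num, ?_⟩
  intro n hn f
  rw [Tal.varC_eq f, Finset.mul_sum]
  apply Finset.sum_le_sum
  intro i _
  by_cases hD : D i f = 0
  · rw [if_pos hD, mul_zero]
    have hz : ∀ S : Finset (Fin n), i ∈ S → Tal.fc f S = 0 := by
      intro S hS
      have h := Tal.fc_D f i S
      rw [hD, if_pos hS] at h
      have h0 : Tal.fc (0 : (Fin n → Bool) → ℝ) S = 0 := by
        simp [Tal.fc, EC]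
      rw [h0] at h
      linarith
    apply le_of_eq
    apply Finset.sum_eq_zero
    intro S _
    by_cases hS : i ∈ S
    · rw [if_pos hS, hz S hS]
      norm_num
    · rw [if_neg hS]
  · rw [if_neg hD]
    set g := D i f with hgdef
    set L := EC (fun x => |g x|) with hLdef
    set Q := EC (fun x => g x ^ 2) with hQdef
    set M := Real.sqrt Q with hMdef
    obtain ⟨x0, hx0⟩ : ∃ x, g x ≠ 0 := Function.ne_iff.mp hD
    have hLpos : 0 < L := by
      rw [hLdef]
      unfold EC
      apply div_pos _ (by positivity)
      exact Finset.sum_pos' (fun x _ => abs_nonneg _)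
        ⟨x0, Finset.mem_univ x0, abs_pos.mpr hx0⟩
    have hQ0 : (0:ℝ) ≤ Q := Tal.EC_nonneg fun x => sq_nonneg _
    have hM0 : (0:ℝ) ≤ M := Real.sqrt_nonneg _
    have hMsq : M ^ 2 = Q := Real.sq_sqrt hQ0
    have hLM : L ≤ M := by
      have hcs := Tal.EC_CS (fun x => |g x|) (fun _ : Fin n → Bool => (1:ℝ))
      have r1 : EC (fun x => |g x| * 1) = L := Tal.EC_congr fun x => by rw [mul_one]
      have r2 : EC (fun x => |g x| ^ 2) = Q := Tal.EC_congr fun x => by rw [sq_abs]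
      have r3 : EC (fun _ : Fin n → Bool => (1:ℝ) ^ 2) = 1 := by
        rw [Tal.EC_congr (fun x => one_pow 2)]
        exact Tal.EC_const 1
      rw [r1, r2, r3, Real.sqrt_one, mul_one] at hcs
      exact hcs
    have hMpos : 0 < M := lt_of_lt_of_le hLpos hLM
    -- apply the core lemma
    have hcore := Tal.core (fun S : Finset (Fin n) => if i ∈ S then Tal.fc g S ^ 2 else 0)
        (fun S => S.card) L M
        (fun S => by by_cases h : i ∈ S <;> simp [h, sq_nonneg])
        (fun S hb => by
          by_cases h : i ∈ S
          · exact Finset.card_pos.mpr ⟨i, h⟩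
          · exact absurd (if_neg h) hb)
        hLpos hLM
        (by
          rw [hMsq]
          calc (∑ S : Finset (Fin n), if i ∈ S then Tal.fc g S ^ 2 else 0)
              ≤ ∑ S : Finset (Fin n), Tal.fc g S ^ 2 := by
                apply Finset.sum_le_sum
                intro S _
                by_cases h : i ∈ S
                · rw [if_pos h]
                · rw [if_neg h]; exact sq_nonneg _
            _ = ∑ S : Finset (Fin n), Tal.fc g S * Tal.fc g S :=
                Finset.sum_congr rfl fun S _ => by ring
            _ = Q := by rw [Tal.parseval g g]; exact Tal.EC_congr fun x => by ring)
        (by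
          calc (∑ S : Finset (Fin n), (if i ∈ S then Tal.fc g S ^ 2 else 0) * (1/2:ℝ) ^ S.card)
              ≤ ∑ S : Finset (Fin n), (1/2:ℝ) ^ S.card * Tal.fc g S ^ 2 := by
                apply Finset.sum_le_sum
                intro S _
                by_cases h : i ∈ S
                · rw [if_pos h]; exact le_of_eq (by ring)
                · rw [if_neg h, zero_mul]
                  exact mul_nonneg (by positivity) (sq_nonneg _)
            _ ≤ Real.sqrt L * (Real.sqrt M * M) := by
                have hch := Tal.chain g
                rw [hLdef, hMdef, hQdef]
                exact hch)
    have hnorm2 : normC 2 g = M := by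
      rw [Tal.normC_two g, ← hQdef, ← hMdef]
    have hnorm1 : normC 1 g = L := by
      rw [Tal.normC_one g, ← hLdef]
    have hquarter : (∑ S : Finset (Fin n), if i ∈ S then Tal.fc f S ^ 2 / (S.card : ℝ) else 0)
        = (∑ S : Finset (Fin n),
            (if i ∈ S then Tal.fc g S ^ 2 else 0) / (S.card : ℝ)) / 4 := by
      rw [Finset.sum_div]
      apply Finset.sum_congr rfl
      intro S _
      by_cases h : i ∈ S
      · rw [if_pos h, if_pos h]
        have hfD := Tal.fc_D f i S
        rw [if_pos h, ← hgdef] at hfD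
        rw [hfD]
        ring
      · rw [if_neg h, if_neg h]
        simp
    have hlog0 : (0:ℝ) ≤ Real.log (M / L) :=
      Real.log_nonneg ((one_le_div hLpos).mpr hLM)
    have hXnn : (0:ℝ) ≤ M ^ 2 / (1 + Real.log (M / L)) :=
      div_nonneg (sq_nonneg M) (by linarith)
    rw [hnorm2, hnorm1, hquarter]
    linarith [hcore, hXnn]
end

section
/- (KKL-type alternative at order two) There exist absolute constants c > 0 and η ∈ (0,1), independent of n and f, such that for every n ≥ 2 and every Boolean function f : C_n → {0,1}, at least one of the following holds: (a) there exists i ∈ {1,…,n} with I_i(f) ≥ c · (Var_{μⁿ}(f))^{1/(1+η)} · (1/n)^{1/(1+η)}; or (b) there exist i ≠ j in {1,…,n} with I_{(i,j)}(f) ≥ c · Var_{μⁿ}(f) · ((log n)/n)². -/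
open scoped Classical

/-- Influence of the `i`-th coordinate of a Boolean function: `Iᵢ(f) = ‖Dᵢf‖₁`. -/
noncomputable def influence {n : ℕ} (i : Fin n) (f : (Fin n → Bool) → ℝ) : ℝ :=
  normC 1 (D i f)

/-- Influence of the couple `(i,j)` : `I₍ᵢ,ⱼ₎(f) = (1/2)‖D_{ij} f‖₁` where `D_{ij} = Dᵢ ∘ Dⱼ`. -/
noncomputable def influence2 {n : ℕ} (i j : Fin n) (f : (Fin n → Bool) → ℝ) : ℝ :=
  (1 / 2) * normC 1 (D i (D j f))



namespace KKL
open Finset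
variable {n : ℕ}

def sg (b : Bool) : ℝ := if b then 1 else -1


lemma sg_sq (b : Bool) : sg b * sg b = 1 := by cases b <;> simp [sg]


lemma sg_mul_self_ne {a b : Bool} (h : a ≠ b) : sg a * sg b = -1 := by
  cases a <;> cases b <;> simp_all [sg]

/-- Walsh character -/

def chi (S : Finset (Fin n)) (x : Fin n → Bool) : ℝ := ∏ i ∈ S, sg (x i)


lemma chi_sq (S : Finset (Fin n)) (x : Fin n → Bool) : chi S x * chi S x = 1 := by
  rw [chi, ← Finset.prod_mul_distrib]
  exact Finset.prod_eq_one (fun i _ => sg_sq (x i))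


lemma ec_add (f g : (Fin n → Bool) → ℝ) : EC (fun x => f x + g x) = EC f + EC g := by
  simp [EC, Finset.sum_add_distrib, add_div]


lemma ec_sub (f g : (Fin n → Bool) → ℝ) : EC (fun x => f x - g x) = EC f - EC g := by
  simp [EC, Finset.sum_sub_distrib, sub_div]


lemma ec_const (a : ℝ) : EC (fun _ : Fin n → Bool => a) = a := by
  simp [EC, Finset.card_univ]


lemma ec_smul (a : ℝ) (f : (Fin n → Bool) → ℝ) :
    EC (fun x => a * f x) = a * EC f := by
  simp [EC, ← Finset.mul_sum, mul_div_assoc]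


lemma ec_mono {f g : (Fin n → Bool) → ℝ} (h : ∀ x, f x ≤ g x) : EC f ≤ EC g := by
  apply div_le_div_of_nonneg_right ?_ (by positivity)
  exact Finset.sum_le_sum fun x _ => h x


lemma ec_nonneg {f : (Fin n → Bool) → ℝ} (h : ∀ x, 0 ≤ f x) : 0 ≤ EC f := by
  apply div_nonneg (Finset.sum_nonneg fun x _ => h x) (by positivity)


lemma ec_sum {ι : Type*} (s : Finset ι) (f : ι → (Fin n → Bool) → ℝ) :
    EC (fun x => ∑ j ∈ s, f j x) = ∑ j ∈ s, EC (f j) := by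
  rw [EC, Finset.sum_comm, Finset.sum_div]
  rfl



lemma cubeFlip_flip (i : Fin n) (x : Fin n → Bool) : cubeFlip i (cubeFlip i x) = x := by
  funext j
  by_cases h : j = i
  · subst h; simp [cubeFlip]
  · simp [cubeFlip, Function.update_of_ne h]


lemma cubeFlip_apply_self (i : Fin n) (x : Fin n → Bool) : cubeFlip i x i = !x i := by
  simp [cubeFlip]


lemma cubeFlip_apply_ne (i j : Fin n) (x : Fin n → Bool) (h : j ≠ i) :
    cubeFlip i x j = x j := by simp [cubeFlip, Function.update_of_ne h]


lemma sum_flip (i : Fin n) (g : (Fin n → Bool) → ℝ) :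
    ∑ x : Fin n → Bool, g (cubeFlip i x) = ∑ x : Fin n → Bool, g x :=
  Fintype.sum_bijective (cubeFlip i)
    (Function.Involutive.bijective (cubeFlip_flip i)) _ _ (fun _ => rfl)


lemma ec_flip (i : Fin n) (g : (Fin n → Bool) → ℝ) :
    EC (fun x => g (cubeFlip i x)) = EC g := by
  rw [EC, sum_flip]; rfl


lemma sg_not (b : Bool) : sg (!b) = - sg b := by cases b <;> simp [sg]


lemma chi_flip (S : Finset (Fin n)) (i : Fin n) (x : Fin n → Bool) :
    chi S (cubeFlip i x) = (if i ∈ S then -1 else 1) * chi S x := by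
  have hP : ∏ j ∈ S.erase i, sg (cubeFlip i x j) = ∏ j ∈ S.erase i, sg (x j) :=
    Finset.prod_congr rfl fun j hj => by
      rw [cubeFlip_apply_ne i j x (Finset.ne_of_mem_erase hj)]
  by_cases h : i ∈ S
  · rw [if_pos h, chi, ← Finset.mul_prod_erase _ _ h, cubeFlip_apply_self, sg_not, hP,
      chi, ← Finset.mul_prod_erase _ _ h]
    ring
  · rw [if_neg h, one_mul, chi, chi]
    exact Finset.prod_congr rfl fun j hj => by
      rw [cubeFlip_apply_ne i j x (fun e => h (e ▸ hj))]


lemma ec_chi (S : Finset (Fin n)) : EC (chi S) = if S = ∅ then 1 else 0 := by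
  by_cases h : S = ∅
  · subst h
    rw [if_pos rfl, show (chi ∅ : (Fin n → Bool) → ℝ) = fun _ => 1 by funext x; simp [chi],
      ec_const]
  · obtain ⟨i, hi⟩ := Finset.nonempty_iff_ne_empty.2 h
    have h1 : EC (fun x => chi S (cubeFlip i x)) = EC (chi S) := ec_flip i (chi S)
    have h2 : EC (fun x => chi S (cubeFlip i x)) = - EC (chi S) := by
      have he : (fun x => chi S (cubeFlip i x)) = fun x => (-1) * chi S x := by
        funext x; rw [chi_flip, if_pos hi]
      rw [he, ec_smul]; ring
    rw [if_neg h]; linarith [h1, h2]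


lemma chi_mul_chi (S T : Finset (Fin n)) (x : Fin n → Bool) :
    chi S x * chi T x = chi (symmDiff S T) x := by
  have h1 : chi S x = chi (S \ T) x * chi (S ∩ T) x := by
    rw [chi, chi, chi, ← Finset.prod_union (Finset.disjoint_sdiff_inter S T),
      Finset.sdiff_union_inter]
  have h2 : chi T x = chi (T \ S) x * chi (S ∩ T) x := by
    rw [chi, chi, chi, Finset.inter_comm S T,
      ← Finset.prod_union (Finset.disjoint_sdiff_inter T S), Finset.sdiff_union_inter]
  have h3 : chi (symmDiff S T) x = chi (S \ T) x * chi (T \ S) x := by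
    rw [chi, chi, chi, ← Finset.prod_union disjoint_sdiff_sdiff]
    congr 1
  rw [h1, h2, h3]
  linear_combination (chi (S \ T) x * chi (T \ S) x) * chi_sq (S ∩ T) x


lemma ec_chi_mul_chi (S T : Finset (Fin n)) :
    EC (fun x => chi S x * chi T x) = if S = T then 1 else 0 := by
  have he : (fun x => chi S x * chi T x) = chi (symmDiff S T) := by
    funext x; exact chi_mul_chi S T x
  rw [he, ec_chi]
  congr 1
  rw [eq_iff_iff]
  constructor
  · intro h; exact symmDiff_eq_bot.1 h
  · intro h; exact symmDiff_eq_bot.2 h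


noncomputable def coef (f : (Fin n → Bool) → ℝ) (S : Finset (Fin n)) : ℝ :=
  EC (fun x => f x * chi S x)


lemma sum_chi_chi (y x : Fin n → Bool) :
    ∑ S : Finset (Fin n), chi S y * chi S x = if y = x then (2:ℝ)^n else 0 := by
  have h1 : ∀ S : Finset (Fin n), chi S y * chi S x = ∏ i ∈ S, (sg (y i) * sg (x i)) := by
    intro S; rw [chi, chi, Finset.prod_mul_distrib]
  have h2 : ∑ S : Finset (Fin n), ∏ i ∈ S, (sg (y i) * sg (x i))
      = ∏ i : Fin n, (sg (y i) * sg (x i) + 1) := by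
    rw [Finset.prod_add]
    rw [Finset.powerset_univ]
    exact Finset.sum_congr rfl fun S _ => by simp
  rw [Finset.sum_congr rfl fun S _ => h1 S, h2]
  by_cases h : y = x
  · subst h
    rw [if_pos rfl]
    have h2 : ∀ i : Fin n, sg (y i) * sg (y i) + 1 = 2 := fun i => by rw [sg_sq]; norm_num
    rw [Finset.prod_congr rfl fun i _ => h2 i, Finset.prod_const, Finset.card_univ,
      Fintype.card_fin]
  · rw [if_neg h]
    obtain ⟨i, hi⟩ : ∃ i, y i ≠ x i := by
      by_contra hc; push_neg at hc; exact h (funext hc)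
    exact Finset.prod_eq_zero (Finset.mem_univ i) (by rw [sg_mul_self_ne hi]; ring)


lemma inversion (f : (Fin n → Bool) → ℝ) (x : Fin n → Bool) :
    ∑ S : Finset (Fin n), coef f S * chi S x = f x := by
  have step1 : ∀ S : Finset (Fin n),
      coef f S * chi S x = ∑ y : Fin n → Bool, f y * (chi S y * chi S x) / 2^n := by
    intro S
    rw [coef, EC, div_mul_eq_mul_div, Finset.sum_mul, Finset.sum_div]
    exact Finset.sum_congr rfl fun y _ => by ring
  rw [Finset.sum_congr rfl fun S _ => step1 S, Finset.sum_comm]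
  have step2 : ∀ y : Fin n → Bool,
      ∑ S : Finset (Fin n), f y * (chi S y * chi S x) / 2^n
        = f y * (if y = x then (2:ℝ)^n else 0) / 2^n := by
    intro y
    rw [← sum_chi_chi y x, Finset.mul_sum, Finset.sum_div]
  rw [Finset.sum_congr rfl fun y _ => step2 y]
  have step3 : ∀ y : Fin n → Bool, f y * (if y = x then (2:ℝ)^n else 0) / 2^n
      = if y = x then f y else 0 := by
    intro y
    by_cases hy : y = x
    · rw [if_pos hy, if_pos hy, mul_div_assoc, div_self (by positivity), mul_one]
    · rw [if_neg hy, if_neg hy, mul_zero, zero_div]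
  rw [Finset.sum_congr rfl fun y _ => step3 y]
  simp


lemma coef_expansion (a : Finset (Fin n) → ℝ) (T : Finset (Fin n)) :
    coef (fun x => ∑ S : Finset (Fin n), a S * chi S x) T = a T := by
  rw [coef]
  have he : (fun x => (∑ S : Finset (Fin n), a S * chi S x) * chi T x)
      = fun x => ∑ S : Finset (Fin n), a S * (chi S x * chi T x) := by
    funext x; rw [Finset.sum_mul]; exact Finset.sum_congr rfl fun S _ => by ring
  rw [he, ec_sum]
  rw [Finset.sum_congr rfl fun S _ => by rw [ec_smul, ec_chi_mul_chi]]
  simp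


lemma parseval (f g : (Fin n → Bool) → ℝ) :
    EC (fun x => f x * g x) = ∑ S : Finset (Fin n), coef f S * coef g S := by
  have he : (fun x => f x * g x)
      = fun x => ∑ S : Finset (Fin n), coef g S * (f x * chi S x) := by
    funext x
    rw [Finset.sum_congr rfl fun S _ => show coef g S * (f x * chi S x)
        = f x * (coef g S * chi S x) by ring, ← Finset.mul_sum, inversion]
  rw [he, ec_sum, Finset.sum_congr rfl fun S _ => by rw [ec_smul, ← coef]]
  exact Finset.sum_congr rfl fun S _ => mul_comm _ _


lemma coef_D (i : Fin n) (f : (Fin n → Bool) → ℝ) (S : Finset (Fin n)) :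
    coef (D i f) S = if i ∈ S then -2 * coef f S else 0 := by
  have h0 : coef (D i f) S = EC (fun x => f (cubeFlip i x) * chi S x) - coef f S := by
    rw [coef, show (fun x => D i f x * chi S x)
        = fun x => f (cubeFlip i x) * chi S x - f x * chi S x from
      funext fun x => by rw [D]; ring, ec_sub, coef]
  have h1 : EC (fun x => f (cubeFlip i x) * chi S x)
      = (if i ∈ S then -1 else 1) * coef f S := by
    have h2 : EC (fun y => f (cubeFlip i y) * chi S y)
        = EC (fun x => f x * chi S (cubeFlip i x)) := by
      have h4 := ec_flip i (fun x => f x * chi S (cubeFlip i x))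
      simpa [cubeFlip_flip] using h4
    rw [h2, show (fun x => f x * chi S (cubeFlip i x))
        = fun x => (if i ∈ S then (-1:ℝ) else 1) * (f x * chi S x) from
      funext fun x => by rw [chi_flip]; ring, ec_smul, coef]
  rw [h0, h1]
  by_cases h : i ∈ S
  · rw [if_pos h, if_pos h]; ring
  · rw [if_neg h, if_neg h]; ring


lemma ec_sq (f : (Fin n → Bool) → ℝ) :
    EC (fun x => f x * f x) = ∑ S : Finset (Fin n), coef f S ^ 2 := by
  rw [parseval]; exact Finset.sum_congr rfl fun S _ => by rw [sq]


lemma normC_one (g : (Fin n → Bool) → ℝ) : normC 1 g = EC (fun x => |g x|) := by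
  simp [normC, Real.rpow_one]


lemma ecD_sq (i : Fin n) (f : (Fin n → Bool) → ℝ) :
    EC (fun x => D i f x * D i f x)
      = ∑ S ∈ Finset.univ.filter (fun S : Finset (Fin n) => i ∈ S), 4 * coef f S ^ 2 := by
  rw [parseval, ← Finset.sum_filter_add_sum_filter_not Finset.univ (fun S : Finset (Fin n) => i ∈ S)]
  have h1 : ∀ S ∈ Finset.univ.filter (fun S : Finset (Fin n) => i ∈ S),
      coef (D i f) S * coef (D i f) S = 4 * coef f S ^ 2 := by
    intro S hS
    rw [coef_D, if_pos (Finset.mem_filter.1 hS).2]; ring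
  have h2 : ∀ S ∈ Finset.univ.filter (fun S : Finset (Fin n) => ¬ i ∈ S),
      coef (D i f) S * coef (D i f) S = 0 := by
    intro S hS
    rw [coef_D, if_neg (Finset.mem_filter.1 hS).2]; ring
  rw [Finset.sum_congr rfl h1, Finset.sum_congr rfl h2, Finset.sum_const_zero, add_zero]


lemma absD_eq {f : (Fin n → Bool) → ℝ} (hf : ∀ x, f x = 0 ∨ f x = 1) (i : Fin n) : ∀ x, |D i f x| = D i f x * D i f x := by
  intro x
  rw [D]
  rcases hf (cubeFlip i x) with h1 | h1 <;> rcases hf x with h2 | h2 <;>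
    rw [h1, h2] <;> norm_num


lemma influence_eq {f : (Fin n → Bool) → ℝ} (hf : ∀ x, f x = 0 ∨ f x = 1) (i : Fin n) :
    influence i f = ∑ S ∈ Finset.univ.filter (fun S : Finset (Fin n) => i ∈ S),
      4 * coef f S ^ 2 := by
  rw [influence, normC_one, show (fun x => |D i f x|) = fun x => D i f x * D i f x from
    funext fun x => absD_eq hf i x, ecD_sq]


lemma influence_nonneg (i : Fin n) (g : (Fin n → Bool) → ℝ) : 0 ≤ influence i g := by
  rw [influence, normC_one]
  exact ec_nonneg fun x => abs_nonneg _


lemma absD_le {f : (Fin n → Bool) → ℝ} (hf : ∀ x, f x = 0 ∨ f x = 1) (i : Fin n) : ∀ x, |D i f x| ≤ 1 := by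
  intro x
  rw [D]
  rcases hf (cubeFlip i x) with h1 | h1 <;> rcases hf x with h2 | h2 <;>
    rw [h1, h2] <;> norm_num


lemma coef_DD (i j : Fin n) (S : Finset (Fin n)) :
    coef (D i (D j f)) S = if i ∈ S ∧ j ∈ S then 4 * coef f S else 0 := by
  rw [coef_D]
  by_cases hi : i ∈ S
  · rw [if_pos hi, coef_D]
    by_cases hj : j ∈ S
    · rw [if_pos hj, if_pos ⟨hi, hj⟩]; ring
    · rw [if_neg hj, if_neg (fun h => hj h.2)]; ring
  · rw [if_neg hi, if_neg (fun h => hi h.1)]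


lemma influence2_ge {f : (Fin n → Bool) → ℝ} (hf : ∀ x, f x = 0 ∨ f x = 1) (i j : Fin n) :
    4 * ∑ S ∈ Finset.univ.filter (fun S : Finset (Fin n) => i ∈ S ∧ j ∈ S), coef f S ^ 2
      ≤ influence2 i j f := by
  have hb : ∀ x, |D j f x| ≤ 1 := absD_le hf j
  have hDD : ∀ x, D i (D j f) x * D i (D j f) x ≤ 2 * |D i (D j f) x| := by
    intro x
    have h2 : |D i (D j f) x| ≤ 2 := by
      rw [D]
      calc |D j f (cubeFlip i x) - D j f x| ≤ |D j f (cubeFlip i x)| + |D j f x| :=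
        abs_sub _ _
      _ ≤ 2 := by linarith [hb (cubeFlip i x), hb x]
    calc D i (D j f) x * D i (D j f) x = |D i (D j f) x| * |D i (D j f) x| :=
          (abs_mul_abs_self _).symm
    _ ≤ 2 * |D i (D j f) x| := by nlinarith [abs_nonneg (D i (D j f) x)]
  have hpar : EC (fun x => D i (D j f) x * D i (D j f) x)
      = ∑ S ∈ Finset.univ.filter (fun S : Finset (Fin n) => i ∈ S ∧ j ∈ S),
        16 * coef f S ^ 2 := by
    rw [ec_sq]
    rw [← Finset.sum_filter_add_sum_filter_not Finset.univ
      (fun S : Finset (Fin n) => i ∈ S ∧ j ∈ S)]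
    have h1 : ∀ S ∈ Finset.univ.filter (fun S : Finset (Fin n) => i ∈ S ∧ j ∈ S),
        coef (D i (D j f)) S ^ 2 = 16 * coef f S ^ 2 := fun S hS => by
      rw [coef_DD, if_pos (Finset.mem_filter.1 hS).2]; ring
    have h2 : ∀ S ∈ Finset.univ.filter (fun S : Finset (Fin n) => ¬(i ∈ S ∧ j ∈ S)),
        coef (D i (D j f)) S ^ 2 = 0 := fun S hS => by
      rw [coef_DD, if_neg (Finset.mem_filter.1 hS).2]; ring
    rw [Finset.sum_congr rfl h1, Finset.sum_congr rfl h2, Finset.sum_const_zero, add_zero]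
  have hineq : EC (fun x => D i (D j f) x * D i (D j f) x)
      ≤ 2 * EC (fun x => |D i (D j f) x|) := by
    calc EC (fun x => D i (D j f) x * D i (D j f) x)
        ≤ EC (fun x => 2 * |D i (D j f) x|) := ec_mono hDD
      _ = 2 * EC (fun x => |D i (D j f) x|) := ec_smul 2 _
  rw [influence2, normC_one]
  rw [hpar] at hineq
  have : ∑ S ∈ Finset.univ.filter (fun S : Finset (Fin n) => i ∈ S ∧ j ∈ S), 16 * coef f S ^2
      = 16 * ∑ S ∈ Finset.univ.filter (fun S : Finset (Fin n) => i ∈ S ∧ j ∈ S), coef f S ^2 := by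
    rw [Finset.mul_sum]
  rw [this] at hineq
  linarith


lemma ec_f_sq {f : (Fin n → Bool) → ℝ} (hf : ∀ x, f x = 0 ∨ f x = 1) : EC (fun x => f x ^ 2) = EC f := by
  have he : (fun x => f x ^ 2) = f := funext fun x => by
    rcases hf x with h | h <;> rw [h] <;> norm_num
  rw [he]


lemma coef_empty (g : (Fin n → Bool) → ℝ) : coef g ∅ = EC g := by
  rw [coef, show (fun x => g x * chi ∅ x) = g from funext fun x => by
    rw [chi, Finset.prod_empty, mul_one]]


lemma varC_eq {f : (Fin n → Bool) → ℝ} : varC f = ∑ S ∈ Finset.univ.erase (∅ : Finset (Fin n)), coef f S ^ 2 := by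
  rw [varC, show (fun x => f x ^ 2) = fun x => f x * f x from funext fun x => by rw [pow_two],
    ec_sq, ← coef_empty f, Finset.sum_erase_eq_sub (Finset.mem_univ ∅), sq]


lemma varC_le_one {f : (Fin n → Bool) → ℝ} (hf : ∀ x, f x = 0 ∨ f x = 1) : varC f ≤ 1 := by
  have h1 : EC (fun x => f x ^ 2) = EC f := ec_f_sq hf
  have h2 : EC f ≤ 1 := by
    calc EC f ≤ EC (fun _ => (1:ℝ)) := ec_mono fun x => by rcases hf x with h | h <;> rw [h] <;> norm_num
    _ = 1 := ec_const 1
  rw [varC, h1]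
  nlinarith [sq_nonneg (EC f)]


lemma chi_insert (j : Fin n) (T : Finset (Fin n)) (hj : j ∉ T) (x : Fin n → Bool) :
    chi (insert j T) x = sg (x j) * chi T x := Finset.prod_insert hj

/-- Cauchy-Schwarz for EC -/

lemma ec_cs (u v : (Fin n → Bool) → ℝ) :
    EC (fun x => u x * v x) ^ 2 ≤ EC (fun x => u x ^ 2) * EC (fun x => v x ^ 2) := by
  rw [EC, EC, EC, div_pow, div_mul_div_comm, ← pow_two ((2:ℝ)^n), ← pow_mul]
  have h2 : ((2:ℝ) ^ n) ^ 2 = (2:ℝ) ^ (n * 2) := by rw [← pow_mul]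
  rw [← h2]
  exact div_le_div_of_nonneg_right (Finset.sum_mul_sq_le_sq_mul_sq _ _ _) (by positivity)


lemma ec_sg_mul (j : Fin n) (h : (Fin n → Bool) → ℝ) (hh : ∀ x, h (cubeFlip j x) = h x) :
    EC (fun x => sg (x j) * h x) = 0 := by
  have h1 := ec_flip j (fun x => sg (x j) * h x)
  have h2 : (fun y => sg (cubeFlip j y j) * h (cubeFlip j y)) = fun y => -1 * (sg (y j) * h y) := by
    funext y; rw [cubeFlip_apply_self, sg_not, hh]; ring
  rw [h2, ec_smul] at h1
  linarith


theorem bonami (J : Finset (Fin n)) (k : ℕ) (a : Finset (Fin n) → ℝ)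
    (h : ∀ S, a S ≠ 0 → S ⊆ J ∧ S.card ≤ k) :
    EC (fun x => (∑ S : Finset (Fin n), a S * chi S x) ^ 4)
      ≤ 9 ^ k * (EC (fun x => (∑ S : Finset (Fin n), a S * chi S x) ^ 2)) ^ 2 := by
  induction J using Finset.induction generalizing k a with
  | empty =>
    have hc : ∀ x : Fin n → Bool, (∑ S : Finset (Fin n), a S * chi S x) = a ∅ := by
      intro x
      rw [Finset.sum_eq_single (∅ : Finset (Fin n))]
      · rw [chi, Finset.prod_empty, mul_one]
      · intro S _ hS
        rcases eq_or_ne (a S) 0 with h0 | h0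
        · rw [h0, zero_mul]
        · exact absurd (Finset.subset_empty.1 (h S h0).1) hS
      · intro hmem; exact absurd (Finset.mem_univ _) hmem
    rw [show (fun x => (∑ S : Finset (Fin n), a S * chi S x) ^ 4) = fun _ => a ∅ ^ 4 from
        funext fun x => by rw [hc x],
      show (fun x => (∑ S : Finset (Fin n), a S * chi S x) ^ 2) = fun _ => a ∅ ^ 2 from
        funext fun x => by rw [hc x], ec_const, ec_const]
    have h9 : (1:ℝ) ≤ 9 ^ k := one_le_pow₀ (by norm_num)
    nlinarith [pow_nonneg (sq_nonneg (a ∅)) 2, sq_nonneg (a ∅ ^ 2)]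
  | @insert j J' hjJ IH =>
    -- decompose
    set a0 : Finset (Fin n) → ℝ := fun S => if j ∈ S then 0 else a S with ha0def
    set a1 : Finset (Fin n) → ℝ := fun S => if j ∈ S then 0 else a (insert j S) with ha1def
    set g0 : (Fin n → Bool) → ℝ := fun x => ∑ S : Finset (Fin n), a0 S * chi S x with hg0def
    set g1 : (Fin n → Bool) → ℝ := fun x => ∑ S : Finset (Fin n), a1 S * chi S x with hg1def
    have hsplit : ∀ x, (∑ S : Finset (Fin n), a S * chi S x) = g0 x + sg (x j) * g1 x := by
      intro x
      have h01 : ∑ S ∈ Finset.univ.filter (fun S : Finset (Fin n) => ¬ j ∈ S), a S * chi S x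
          = g0 x := by
        show _ = ∑ S : Finset (Fin n), a0 S * chi S x
        rw [← Finset.sum_filter_add_sum_filter_not Finset.univ
          (fun S : Finset (Fin n) => ¬ j ∈ S) (fun S => a0 S * chi S x)]
        have hz : ∀ S ∈ Finset.univ.filter (fun S : Finset (Fin n) => ¬¬ j ∈ S),
            a0 S * chi S x = 0 := by
          intro S hS
          have : j ∈ S := not_not.1 (Finset.mem_filter.1 hS).2
          rw [ha0def]; simp [this]
        rw [Finset.sum_congr rfl hz, Finset.sum_const_zero, add_zero]
        refine Finset.sum_congr rfl fun S hS => ?_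
        have : ¬ j ∈ S := (Finset.mem_filter.1 hS).2
        rw [ha0def]; simp [this]
      have h02 : ∑ S ∈ Finset.univ.filter (fun S : Finset (Fin n) => j ∈ S), a S * chi S x
          = sg (x j) * g1 x := by
        have hbij : ∑ S ∈ Finset.univ.filter (fun S : Finset (Fin n) => j ∈ S), a S * chi S x
            = ∑ T ∈ Finset.univ.filter (fun T : Finset (Fin n) => ¬ j ∈ T),
                a (insert j T) * (sg (x j) * chi T x) := by
          refine Finset.sum_bij' (fun S _ => S.erase j) (fun T _ => insert j T) ?_ ?_ ?_ ?_ ?_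
          · intro S hS
            simp [Finset.mem_filter]
          · intro T hT
            simp [Finset.mem_filter]
          · intro S hS
            exact Finset.insert_erase (Finset.mem_filter.1 hS).2
          · intro T hT
            exact Finset.erase_insert (Finset.mem_filter.1 hT).2
          · intro S hS
            have hjS : j ∈ S := (Finset.mem_filter.1 hS).2
            rw [← chi_insert j (S.erase j) (Finset.notMem_erase j S) x,
              Finset.insert_erase hjS]
        show _ = sg (x j) * ∑ S : Finset (Fin n), a1 S * chi S x
        rw [hbij, Finset.mul_sum]
        rw [← Finset.sum_filter_add_sum_filter_not Finset.univ
          (fun S : Finset (Fin n) => ¬ j ∈ S) (fun S => sg (x j) * (a1 S * chi S x))]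
        have hz : ∀ S ∈ Finset.univ.filter (fun S : Finset (Fin n) => ¬¬ j ∈ S),
            sg (x j) * (a1 S * chi S x) = 0 := by
          intro S hS
          have : j ∈ S := not_not.1 (Finset.mem_filter.1 hS).2
          rw [ha1def]; simp [this]
        rw [Finset.sum_congr rfl hz, Finset.sum_const_zero, add_zero]
        refine Finset.sum_congr rfl fun S hS => ?_
        have hns : ¬ j ∈ S := (Finset.mem_filter.1 hS).2
        rw [ha1def]; simp only [hns, if_false]; ring
      rw [← Finset.sum_filter_add_sum_filter_not Finset.univ
        (fun S : Finset (Fin n) => j ∈ S) (fun S => a S * chi S x), h01, h02]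
      ring
    -- flip invariance
    have hg0flip : ∀ x, g0 (cubeFlip j x) = g0 x := by
      intro x
      show (∑ S : Finset (Fin n), a0 S * chi S (cubeFlip j x))
          = ∑ S : Finset (Fin n), a0 S * chi S x
      refine Finset.sum_congr rfl fun S _ => ?_
      rcases eq_or_ne (a0 S) 0 with h0 | h0
      · rw [h0, zero_mul, zero_mul]
      · have hjS : ¬ j ∈ S := fun hm => h0 (by rw [ha0def]; simp [hm])
        rw [chi_flip, if_neg hjS, one_mul]
    have hg1flip : ∀ x, g1 (cubeFlip j x) = g1 x := by
      intro x
      show (∑ S : Finset (Fin n), a1 S * chi S (cubeFlip j x))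
          = ∑ S : Finset (Fin n), a1 S * chi S x
      refine Finset.sum_congr rfl fun S _ => ?_
      rcases eq_or_ne (a1 S) 0 with h0 | h0
      · rw [h0, zero_mul, zero_mul]
      · have hjS : ¬ j ∈ S := fun hm => h0 (by rw [ha1def]; simp [hm])
        rw [chi_flip, if_neg hjS, one_mul]
    -- support conditions
    have ha0 : ∀ S, a0 S ≠ 0 → S ⊆ J' ∧ S.card ≤ k := by
      intro S h0
      have hjS : ¬ j ∈ S := fun hm => h0 (by rw [ha0def]; simp [hm])
      have haS : a S ≠ 0 := by rw [ha0def] at h0; simpa [hjS] using h0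
      obtain ⟨hsub, hcard⟩ := h S haS
      refine ⟨fun y hy => ?_, hcard⟩
      rcases Finset.mem_insert.1 (hsub hy) with e | hmem
      · exact absurd (e ▸ hy) hjS
      · exact hmem
    have ha1 : ∀ S, a1 S ≠ 0 → S ⊆ J' ∧ S.card ≤ k - 1 := by
      intro S h0
      have hjS : ¬ j ∈ S := fun hm => h0 (by rw [ha1def]; simp [hm])
      have haS : a (insert j S) ≠ 0 := by rw [ha1def] at h0; simpa [hjS] using h0
      obtain ⟨hsub, hcard⟩ := h _ haS
      constructor
      · intro y hy
        rcases Finset.mem_insert.1 (hsub (Finset.mem_insert_of_mem hy)) with e | hm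
        · exact absurd (e ▸ hy) hjS
        · exact hm
      · rw [Finset.card_insert_of_notMem hjS] at hcard
        omega
    have hP := IH k a0 ha0
    have hQ := IH (k-1) a1 ha1
    -- expectation identities
    have hEg2 : EC (fun x => (∑ S : Finset (Fin n), a S * chi S x) ^ 2)
        = EC (fun x => g0 x ^ 2) + EC (fun x => g1 x ^ 2) := by
      have e2 : (fun x => (∑ S : Finset (Fin n), a S * chi S x) ^ 2)
          = fun x => (g0 x ^ 2 + g1 x ^ 2) + sg (x j) * (2 * (g0 x * g1 x)) := by
        funext x
        rw [hsplit x]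
        linear_combination (g1 x ^ 2) * sg_sq (x j)
      rw [e2, ec_add, ec_sg_mul j _ (fun x => by rw [hg0flip, hg1flip]), add_zero, ec_add]
    have hEg4 : EC (fun x => (∑ S : Finset (Fin n), a S * chi S x) ^ 4)
        = EC (fun x => g0 x ^ 4) + (6 * EC (fun x => g0 x ^ 2 * g1 x ^ 2)
            + EC (fun x => g1 x ^ 4)) := by
      have e4 : (fun x => (∑ S : Finset (Fin n), a S * chi S x) ^ 4)
          = fun x => (g0 x ^ 4 + (6 * (g0 x ^ 2 * g1 x ^ 2) + g1 x ^ 4))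
              + sg (x j) * (4 * g0 x ^ 3 * g1 x + 4 * g0 x * g1 x ^ 3) := by
        funext x
        rw [hsplit x]
        linear_combination (6 * g0 x ^ 2 * g1 x ^ 2 + 4 * g0 x * g1 x ^ 3 * sg (x j)
          + g1 x ^ 4 * (sg (x j) * sg (x j) + 1)) * sg_sq (x j)
      rw [e4, ec_add, ec_sg_mul j _ (fun x => by rw [hg0flip, hg1flip]), add_zero,
        ec_add, ec_add, ec_smul]
    -- Cauchy-Schwarz
    have hM2 : EC (fun x => g0 x ^ 2 * g1 x ^ 2) ^ 2
        ≤ EC (fun x => g0 x ^ 4) * EC (fun x => g1 x ^ 4) := by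
      have := ec_cs (fun x => g0 x ^ 2) (fun x => g1 x ^ 2)
      have e40 : (fun x => (g0 x ^ 2) ^ 2) = fun x => g0 x ^ 4 := funext fun x => by ring
      have e41 : (fun x => (g1 x ^ 2) ^ 2) = fun x => g1 x ^ 4 := funext fun x => by ring
      rwa [e40, e41] at this
    have hMnn : 0 ≤ EC (fun x => g0 x ^ 2 * g1 x ^ 2) :=
      ec_nonneg fun x => mul_nonneg (sq_nonneg _) (sq_nonneg _)
    have hpnn : 0 ≤ EC (fun x => g0 x ^ 2) := ec_nonneg fun x => sq_nonneg _
    have hqnn : 0 ≤ EC (fun x => g1 x ^ 2) := ec_nonneg fun x => sq_nonneg _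
    have hPnn : 0 ≤ EC (fun x => g0 x ^ 4) :=
      ec_nonneg fun x => by positivity
    have hQnn : 0 ≤ EC (fun x => g1 x ^ 4) :=
      ec_nonneg fun x => by positivity
    rw [hEg2, hEg4]
    set P := EC (fun x => g0 x ^ 4)
    set Q := EC (fun x => g1 x ^ 4)
    set M := EC (fun x => g0 x ^ 2 * g1 x ^ 2)
    set p := EC (fun x => g0 x ^ 2)
    set q := EC (fun x => g1 x ^ 2)
    rcases k with _ | k'
    · -- k = 0 : g1 vanishes
      have ha1z : ∀ S, a1 S = 0 := by
        intro S
        rw [ha1def]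
        by_cases hjS : j ∈ S
        · simp [hjS]
        · simp only [hjS, if_false]
          by_contra h0
          have := (h _ h0).2
          rw [Finset.card_insert_of_notMem hjS] at this
          omega
      have hg1z : ∀ x, g1 x = 0 := by
        intro x
        show (∑ S : Finset (Fin n), a1 S * chi S x) = 0
        exact Finset.sum_eq_zero fun S _ => by rw [ha1z S, zero_mul]
      have hqz : q = 0 := by
        show EC (fun x => g1 x ^ 2) = 0
        rw [show (fun x => g1 x ^ 2) = fun _ => (0:ℝ) from funext fun x => by
          rw [hg1z x]; ring, ec_const]
      have hQz : Q = 0 := by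
        show EC (fun x => g1 x ^ 4) = 0
        rw [show (fun x => g1 x ^ 4) = fun _ => (0:ℝ) from funext fun x => by
          rw [hg1z x]; ring, ec_const]
      have hMz : M = 0 := by
        show EC (fun x => g0 x ^ 2 * g1 x ^ 2) = 0
        rw [show (fun x => g0 x ^ 2 * g1 x ^ 2) = fun _ => (0:ℝ) from funext fun x => by
          rw [hg1z x]; ring, ec_const]
      rw [hqz, hQz, hMz]
      simpa using hP
    · -- k = k' + 1
      have hQ' : Q ≤ 9 ^ k' * q ^ 2 := by simpa using hQ
      have h3 : ∀ m : ℕ, ((9:ℝ)) ^ m = (3 ^ m) ^ 2 := fun m => by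
        rw [← pow_mul, mul_comm, pow_mul]; norm_num
      have h3nn : ∀ m : ℕ, (0:ℝ) ≤ 3 ^ m := fun m => by positivity
      have hMle : M ≤ (3 ^ (k'+1) * p) * (3 ^ k' * q) := by
        rw [← pow_le_pow_iff_left₀ hMnn (by positivity) (two_ne_zero)]
        calc M ^ 2 ≤ P * Q := hM2
          _ ≤ (9 ^ (k'+1) * p ^ 2) * (9 ^ k' * q ^ 2) := by
              apply mul_le_mul hP hQ' hQnn (by positivity)
          _ = ((3 ^ (k'+1) * p) * (3 ^ k' * q)) ^ 2 := by
              rw [h3 (k'+1), h3 k']; ring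
      have h9succ : (9:ℝ) ^ (k'+1) = 9 * 9 ^ k' := by rw [pow_succ]; ring
      have h3succ : (3:ℝ) ^ (k'+1) = 3 * 3 ^ k' := by rw [pow_succ]; ring
      have hQ'' : Q ≤ 9 ^ (k'+1) * q ^ 2 := by
        calc Q ≤ 9 ^ k' * q ^ 2 := hQ'
          _ ≤ 9 ^ (k'+1) * q ^ 2 := by
              apply mul_le_mul_of_nonneg_right _ (sq_nonneg q)
              apply pow_le_pow_right₀ (by norm_num) (by omega)
      have hM6 : 6 * M ≤ 2 * 9 ^ (k'+1) * (p * q) := by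
        calc 6 * M ≤ 6 * ((3 ^ (k'+1) * p) * (3 ^ k' * q)) := by linarith
          _ = 2 * 9 ^ (k'+1) * (p * q) := by
              rw [h9succ, h3succ, h3 k']; ring
      calc P + (6 * M + Q) ≤ 9 ^ (k'+1) * p ^ 2 + (2 * 9 ^ (k'+1) * (p * q)
            + 9 ^ (k'+1) * q ^ 2) := by linarith
        _ = 9 ^ (k'+1) * (p + q) ^ 2 := by ring



theorem level_bound {f : (Fin n → Bool) → ℝ} (hf : ∀ x, f x = 0 ∨ f x = 1)
    (i : Fin n) (k : ℕ) :
    ∑ S ∈ Finset.univ.filter (fun S : Finset (Fin n) => S.card = k ∧ i ∈ S), coef f S ^ 2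
      ≤ 3 ^ k * (influence i f * Real.sqrt (influence i f)) := by
  set g : (Fin n → Bool) → ℝ := D i f with hg
  set b : Finset (Fin n) → ℝ := fun S => if S.card = k then coef g S else 0 with hb
  set q : (Fin n → Bool) → ℝ := fun x => ∑ S : Finset (Fin n), b S * chi S x with hq
  set W : ℝ := ∑ S ∈ Finset.univ.filter (fun S : Finset (Fin n) => S.card = k),
    coef g S ^ 2 with hW
  set I : ℝ := influence i f with hI
  -- basic facts
  have hInn : 0 ≤ I := by
    rw [hI, influence, normC_one]; exact ec_nonneg fun x => abs_nonneg _
  have hWnn : 0 ≤ W := Finset.sum_nonneg fun S _ => sq_nonneg _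
  have habs : ∀ x, |g x| = g x * g x := absD_eq hf i
  have hEabs : EC (fun x => |g x|) = I := by rw [hI, influence, normC_one]
  -- target = W / 4
  have hT : 4 * ∑ S ∈ Finset.univ.filter
      (fun S : Finset (Fin n) => S.card = k ∧ i ∈ S), coef f S ^ 2 = W := by
    rw [hW, Finset.sum_filter, Finset.sum_filter, Finset.mul_sum]
    refine Finset.sum_congr rfl fun S _ => ?_
    by_cases hc : S.card = k
    · by_cases hiS : i ∈ S
      · rw [if_pos ⟨hc, hiS⟩, if_pos hc, coef_D, if_pos hiS]; ring
      · rw [if_neg (fun h => hiS h.2), if_pos hc, coef_D, if_neg hiS]; ring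
    · rw [if_neg (fun h => hc h.1), if_neg hc]; ring
  -- coefficient facts about q
  have hcoefq : ∀ T : Finset (Fin n), coef q T = b T := fun T => coef_expansion b T
  have hgq : EC (fun x => g x * q x) = W := by
    rw [parseval, hW, Finset.sum_filter]
    refine Finset.sum_congr rfl fun S _ => ?_
    simp only [hcoefq S, hb]
    by_cases hc : S.card = k
    · rw [if_pos hc, if_pos hc]; ring
    · rw [if_neg hc, if_neg hc]; ring
  have hq2 : EC (fun x => q x ^ 2) = W := by
    have e : (fun x => q x ^ 2) = fun x => q x * q x := funext fun x => by ring
    rw [e, parseval, hW, Finset.sum_filter]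
    refine Finset.sum_congr rfl fun S _ => ?_
    simp only [hcoefq S, hb]
    by_cases hc : S.card = k
    · rw [if_pos hc, if_pos hc]; ring
    · rw [if_neg hc, if_neg hc]; ring
  have hq4 : EC (fun x => q x ^ 4) ≤ 9 ^ k * W ^ 2 := by
    have hsupp : ∀ S : Finset (Fin n), b S ≠ 0 → S ⊆ Finset.univ ∧ S.card ≤ k := by
      intro S h0
      refine ⟨Finset.subset_univ S, ?_⟩
      simp only [hb] at h0
      by_cases hc : S.card = k
      · omega
      · simp [hc] at h0
    have hthis := bonami Finset.univ k b hsupp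
    have hthis' : EC (fun x => q x ^ 4) ≤ 9 ^ k * (EC fun x => q x ^ 2) ^ 2 := hthis
    rw [hq2] at hthis'
    exact hthis'
  -- Cauchy-Schwarz chain
  set E : ℝ := EC (fun x => |g x| * |q x|) with hE
  set F : ℝ := EC (fun x => |g x| * q x ^ 2) with hF
  have hEnn : 0 ≤ E := ec_nonneg fun x => mul_nonneg (abs_nonneg _) (abs_nonneg _)
  have hFnn : 0 ≤ F := ec_nonneg fun x => mul_nonneg (abs_nonneg _) (sq_nonneg _)
  have hWE : W ≤ E := by
    rw [← hgq, hE]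
    exact ec_mono fun x => (le_abs_self _).trans (le_of_eq (abs_mul _ _))
  have hE2 : E ^ 2 ≤ I * F := by
    have hcs := ec_cs (fun x => Real.sqrt |g x|) (fun x => Real.sqrt |g x| * |q x|)
    have e1 : (fun x => Real.sqrt |g x| * (Real.sqrt |g x| * |q x|))
        = fun x => |g x| * |q x| := funext fun x => by
      rw [← mul_assoc, Real.mul_self_sqrt (abs_nonneg _)]
    have e2 : (fun x => Real.sqrt |g x| ^ 2) = fun x => |g x| := funext fun x =>
      Real.sq_sqrt (abs_nonneg _)
    have e3 : (fun x => (Real.sqrt |g x| * |q x|) ^ 2) = fun x => |g x| * q x ^ 2 :=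
      funext fun x => by
        rw [mul_pow, Real.sq_sqrt (abs_nonneg _), sq_abs]
    rw [e1, e2, e3, hEabs] at hcs
    exact hcs
  have hF2 : F ^ 2 ≤ I * (9 ^ k * W ^ 2) := by
    have hcs := ec_cs (fun x => |g x|) (fun x => q x ^ 2)
    have e2 : (fun x => |g x| ^ 2) = fun x => |g x| := funext fun x => by
      rw [sq_abs, pow_two, ← habs x]
    have e3 : (fun x => (q x ^ 2) ^ 2) = fun x => q x ^ 4 := funext fun x => by ring
    rw [e2, e3, hEabs] at hcs
    calc F ^ 2 ≤ I * EC (fun x => q x ^ 4) := hcs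
      _ ≤ I * (9 ^ k * W ^ 2) := mul_le_mul_of_nonneg_left hq4 hInn
  -- conclude W ≤ 3^k * I * sqrt I
  have hWbound : W ≤ 3 ^ k * (I * Real.sqrt I) := by
    rcases eq_or_lt_of_le hWnn with hW0 | hWpos
    · rw [← hW0]; positivity
    · have h1 : W ^ 2 ≤ E ^ 2 := pow_le_pow_left₀ hWnn hWE 2
      have h2 : W ^ 4 ≤ 9 ^ k * I ^ 3 * W ^ 2 := by
        calc W ^ 4 = (W ^ 2) ^ 2 := by ring
          _ ≤ (I * F) ^ 2 := pow_le_pow_left₀ (sq_nonneg W) (h1.trans hE2) 2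
          _ = I ^ 2 * F ^ 2 := by ring
          _ ≤ I ^ 2 * (I * (9 ^ k * W ^ 2)) :=
              mul_le_mul_of_nonneg_left hF2 (sq_nonneg I)
          _ = 9 ^ k * I ^ 3 * W ^ 2 := by ring
      have h3 : W ^ 2 ≤ 9 ^ k * I ^ 3 := by
        have := le_of_mul_le_mul_right (by calc W ^ 2 * W ^ 2 = W ^ 4 := by ring
          _ ≤ 9 ^ k * I ^ 3 * W ^ 2 := h2) (pow_pos hWpos 2)
        exact this
      have h4 : (3 ^ k * (I * Real.sqrt I)) ^ 2 = 9 ^ k * I ^ 3 := by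
        rw [mul_pow, mul_pow, Real.sq_sqrt hInn]
        rw [show ((3:ℝ) ^ k) ^ 2 = 9 ^ k by rw [← pow_mul, mul_comm, pow_mul]; norm_num]
        ring
      rw [← pow_le_pow_iff_left₀ hWnn (by positivity) (two_ne_zero)]
      rw [h4]; exact h3
  have hTnn : 0 ≤ ∑ S ∈ Finset.univ.filter
      (fun S : Finset (Fin n) => S.card = k ∧ i ∈ S), coef f S ^ 2 :=
    Finset.sum_nonneg fun S _ => sq_nonneg _
  have hRnn : 0 ≤ 3 ^ k * (I * Real.sqrt I) := by positivity
  linarith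


lemma count_pairs (K : Type*) [Fintype K] [DecidableEq K] (F : Finset K → ℝ) :
    ∑ i : K, ∑ j ∈ Finset.univ.erase i,
      ∑ S ∈ Finset.univ.filter (fun S : Finset K => i ∈ S ∧ j ∈ S), F S
    = ∑ S : Finset K, ((S.card : ℝ) * ((S.card - 1 : ℕ) : ℝ)) * F S := by
  have e1 : ∀ i : K, ∑ j ∈ Finset.univ.erase i,
      ∑ S ∈ Finset.univ.filter (fun S : Finset K => i ∈ S ∧ j ∈ S), F S
      = ∑ S : Finset K, ∑ j ∈ Finset.univ.erase i,
          (if i ∈ S ∧ j ∈ S then F S else 0) := by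
    intro i
    rw [Finset.sum_comm]
    exact Finset.sum_congr rfl fun j _ => Finset.sum_filter _ _
  rw [Finset.sum_congr rfl fun i _ => e1 i, Finset.sum_comm]
  refine Finset.sum_congr rfl fun S _ => ?_
  have e2 : ∀ i : K, ∑ j ∈ Finset.univ.erase i, (if i ∈ S ∧ j ∈ S then F S else 0)
      = if i ∈ S then ((S.card - 1 : ℕ) : ℝ) * F S else 0 := by
    intro i
    by_cases hiS : i ∈ S
    · rw [if_pos hiS]
      have e3 : ∀ j ∈ Finset.univ.erase i, (if i ∈ S ∧ j ∈ S then F S else 0)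
          = if j ∈ S then F S else 0 := fun j _ => by
        by_cases hjS : j ∈ S
        · rw [if_pos ⟨hiS, hjS⟩, if_pos hjS]
        · rw [if_neg (fun h => hjS h.2), if_neg hjS]
      rw [Finset.sum_congr rfl e3, ← Finset.sum_filter]
      have e4 : (Finset.univ.erase i).filter (fun j => j ∈ S) = S.erase i := by
        ext j; simp [Finset.mem_erase, and_comm]
      rw [e4, Finset.sum_const, Finset.card_erase_of_mem hiS, nsmul_eq_mul]
    · rw [if_neg hiS]
      exact Finset.sum_eq_zero fun j _ => if_neg (fun h => hiS h.1)
  rw [Finset.sum_congr rfl fun i _ => e2 i, ← Finset.sum_filter]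
  have e5 : Finset.univ.filter (fun i => i ∈ S) = S := by ext i; simp
  rw [e5, Finset.sum_const, nsmul_eq_mul]
  ring

/-- low-level counting: sum over nonempty sets of card < K -/

lemma low_count (K : Type*) [Fintype K] [DecidableEq K] (F : Finset K → ℝ)
    (hF : ∀ S, 0 ≤ F S) (Kc : ℕ) :
    ∑ S ∈ Finset.univ.filter (fun S : Finset K => 0 < S.card ∧ S.card < Kc), F S
      ≤ ∑ i : K, ∑ k ∈ Finset.range Kc,
          ∑ S ∈ Finset.univ.filter (fun S : Finset K => S.card = k ∧ i ∈ S), F S := by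
  have e1 : ∀ i : K, ∀ k : ℕ, ∑ S ∈ Finset.univ.filter
      (fun S : Finset K => S.card = k ∧ i ∈ S), F S
      = ∑ S : Finset K, (if S.card = k ∧ i ∈ S then F S else 0) :=
    fun i k => Finset.sum_filter _ _
  have e2 : ∑ i : K, ∑ k ∈ Finset.range Kc, ∑ S ∈ Finset.univ.filter
        (fun S : Finset K => S.card = k ∧ i ∈ S), F S
      = ∑ S : Finset K, ∑ i : K, ∑ k ∈ Finset.range Kc,
          (if S.card = k ∧ i ∈ S then F S else 0) := by
    have h1 : ∑ i : K, ∑ k ∈ Finset.range Kc, ∑ S ∈ Finset.univ.filter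
          (fun S : Finset K => S.card = k ∧ i ∈ S), F S
        = ∑ i : K, ∑ k ∈ Finset.range Kc, ∑ S : Finset K,
            (if S.card = k ∧ i ∈ S then F S else 0) :=
      Finset.sum_congr rfl fun i _ => Finset.sum_congr rfl fun k _ => e1 i k
    have h2 : ∑ i : K, ∑ k ∈ Finset.range Kc, ∑ S : Finset K,
          (if S.card = k ∧ i ∈ S then F S else 0)
        = ∑ i : K, ∑ S : Finset K, ∑ k ∈ Finset.range Kc,
            (if S.card = k ∧ i ∈ S then F S else 0) :=
      Finset.sum_congr rfl fun i _ => Finset.sum_comm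
    rw [h1, h2, Finset.sum_comm]
  rw [e2, Finset.sum_filter]
  refine Finset.sum_le_sum fun S _ => ?_
  have e3 : ∀ i : K, ∑ k ∈ Finset.range Kc, (if S.card = k ∧ i ∈ S then F S else 0)
      = if S.card < Kc ∧ i ∈ S then F S else 0 := by
    intro i
    have : ∀ k ∈ Finset.range Kc, (if S.card = k ∧ i ∈ S then F S else 0)
        = if S.card = k then (if i ∈ S then F S else 0) else 0 := by
      intro k _
      by_cases h1 : S.card = k <;> by_cases h2 : i ∈ S <;> simp [h1, h2]
    rw [Finset.sum_congr rfl this, Finset.sum_ite_eq (Finset.range Kc) S.card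
      (fun _ => if i ∈ S then F S else 0)]
    by_cases h1 : S.card < Kc <;> by_cases h2 : i ∈ S <;>
      simp [Finset.mem_range, h1, h2]
  rw [Finset.sum_congr rfl fun i _ => e3 i]
  by_cases hcard : S.card < Kc
  · have : ∀ i : K, (if S.card < Kc ∧ i ∈ S then F S else 0) = if i ∈ S then F S else 0 := by
      intro i; by_cases h2 : i ∈ S <;> simp [hcard, h2]
    rw [Finset.sum_congr rfl fun i _ => this i, ← Finset.sum_filter]
    have e5 : Finset.univ.filter (fun i => i ∈ S) = S := by ext i; simp
    rw [e5, Finset.sum_const, nsmul_eq_mul]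
    by_cases hpos : 0 < S.card ∧ S.card < Kc
    · rw [if_pos hpos]
      calc F S = 1 * F S := by ring
        _ ≤ (S.card : ℝ) * F S := by
            apply mul_le_mul_of_nonneg_right _ (hF S)
            exact_mod_cast hpos.1
    · rw [if_neg hpos]
      exact mul_nonneg (Nat.cast_nonneg _) (hF S)
  · have : ∀ i : K, (if S.card < Kc ∧ i ∈ S then F S else 0) = 0 := by
      intro i; simp [hcard]
    rw [Finset.sum_congr rfl fun i _ => this i, Finset.sum_const_zero]
    rw [if_neg (fun h => hcard h.2)]


lemma mono_xsqrt {a b : ℝ} (ha : 0 ≤ a) (hb : 0 ≤ b)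
    (h : a * Real.sqrt a ≤ b * Real.sqrt b) : a ≤ b := by
  have e : ∀ c : ℝ, 0 ≤ c → (c * Real.sqrt c) ^ 2 = c ^ 3 := fun c hc => by
    rw [mul_pow, Real.sq_sqrt hc]; ring
  have h3 : a ^ 3 ≤ b ^ 3 := by
    calc a ^ 3 = (a * Real.sqrt a) ^ 2 := (e a ha).symm
      _ ≤ (b * Real.sqrt b) ^ 2 :=
          pow_le_pow_left₀ (mul_nonneg ha (Real.sqrt_nonneg a)) h 2
      _ = b ^ 3 := e b hb
  exact (pow_le_pow_iff_left₀ ha hb (by norm_num)).1 h3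

lemma mono_xsqrt' {a b : ℝ} (ha : 0 ≤ a) (h : a ≤ b) :
    a * Real.sqrt a ≤ b * Real.sqrt b :=
  mul_le_mul h (Real.sqrt_le_sqrt h) (Real.sqrt_nonneg a) (ha.trans h)

lemma geom_le (K : ℕ) : ∑ k ∈ Finset.range K, (3:ℝ) ^ k ≤ 3 ^ K := by
  induction K with
  | zero => simp
  | succ m ih =>
      rw [Finset.sum_range_succ, pow_succ]
      nlinarith [pow_nonneg (by norm_num : (0:ℝ) ≤ 3) m]

lemma pow3_bound {n : ℕ} (hn : 2 ≤ n) :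
    (3:ℝ) ^ (⌈Real.log n / 31⌉₊ + 2) ≤ 27 * (n:ℝ) ^ ((1:ℝ)/10) := by
  have hn1 : (1:ℝ) ≤ n := by exact_mod_cast Nat.one_le_of_lt hn
  have hn0 : (0:ℝ) < n := lt_of_lt_of_le one_pos hn1
  have hlog : 0 ≤ Real.log n / 31 := by positivity
  have h1 : ((⌈Real.log n / 31⌉₊ : ℝ)) ≤ Real.log n / 31 + 1 :=
    (Nat.ceil_lt_add_one hlog).le
  have h2 : (3:ℝ) ^ (⌈Real.log n / 31⌉₊ + 2) = 9 * (3:ℝ) ^ ((⌈Real.log n / 31⌉₊ : ℕ)) := by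
    rw [pow_add]; ring
  rw [h2, ← Real.rpow_natCast 3 (⌈Real.log n / 31⌉₊)]
  have h3 : (3:ℝ) ^ ((⌈Real.log n / 31⌉₊ : ℝ)) ≤ (3:ℝ) ^ (Real.log n / 31 + 1) :=
    Real.rpow_le_rpow_of_exponent_le (by norm_num) h1
  have h4 : (3:ℝ) ^ (Real.log n / 31 + 1) = 3 * (3:ℝ) ^ (Real.log n / 31) := by
    rw [Real.rpow_add (by norm_num), Real.rpow_one]; ring
  have h5 : (3:ℝ) ^ (Real.log n / 31) = (n:ℝ) ^ (Real.log 3 / 31) := by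
    rw [Real.rpow_def_of_pos (by norm_num : (0:ℝ) < 3), Real.rpow_def_of_pos hn0]
    congr 1; ring
  have h6 : (n:ℝ) ^ (Real.log 3 / 31) ≤ (n:ℝ) ^ ((1:ℝ)/10) := by
    apply Real.rpow_le_rpow_of_exponent_le hn1
    have : Real.log 3 ≤ 2 := by
      have := Real.log_le_sub_one_of_pos (by norm_num : (0:ℝ) < 3)
      linarith
    linarith
  calc 9 * (3:ℝ) ^ ((⌈Real.log n / 31⌉₊ : ℝ))
      ≤ 9 * (3 * (n:ℝ) ^ (Real.log 3 / 31)) := by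
        rw [← h5, ← h4]; linarith [h3]
    _ = 27 * (n:ℝ) ^ (Real.log 3 / 31) := by ring
    _ ≤ 27 * (n:ℝ) ^ ((1:ℝ)/10) := by linarith [h6]

end KKL

set_option maxHeartbeats 2000000 in
/-- KKL-type alternative at order two: either some coordinate has influence at least
`c · Var(f)^{1/(1+η)} · (1/n)^{1/(1+η)}`, or some couple of distinct coordinates has
influence at least `c · Var(f) · (log n / n)²`. -/
theorem kkl_order_two :
    ∃ c : ℝ, 0 < c ∧ ∃ η : ℝ, 0 < η ∧ η < 1 ∧
      ∀ n : ℕ, 2 ≤ n → ∀ f : (Fin n → Bool) → ℝ,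
        (∀ x, f x = 0 ∨ f x = 1) →
        (∃ i : Fin n,
          c * (varC f) ^ (1 / (1 + η)) * ((1 : ℝ) / n) ^ (1 / (1 + η)) ≤ influence i f) ∨
        (∃ i j : Fin n, i ≠ j ∧
          c * varC f * (Real.log n / n) ^ 2 ≤ influence2 i j f) := by
  classical
  refine ⟨1/1000, by norm_num, 4/11, by norm_num, by norm_num, ?_⟩
  intro n hn f hf
  rcases Classical.em (∃ i j : Fin n, i ≠ j ∧
      (1/1000 : ℝ) * varC f * (Real.log n / n) ^ 2 ≤ influence2 i j f) with hB | hB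
  · exact Or.inr hB
  push_neg at hB
  left
  have hn1 : (1:ℝ) ≤ (n:ℝ) := by exact_mod_cast Nat.one_le_of_lt hn
  have hn0 : (0:ℝ) < (n:ℝ) := lt_of_lt_of_le one_pos hn1
  have hlogn : 0 ≤ Real.log n := Real.log_nonneg hn1
  have hexp : (1:ℝ) / (1 + 4/11) = 11/15 := by norm_num
  rw [hexp]
  have hV0 : 0 ≤ varC f := by
    rw [KKL.varC_eq]
    exact Finset.sum_nonneg fun S _ => sq_nonneg _
  have hV1 : varC f ≤ 1 := KKL.varC_le_one hf
  obtain ⟨i0, -, hmax⟩ := Finset.exists_max_image Finset.univ (fun i => influence i f)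
    ⟨⟨0, by omega⟩, Finset.mem_univ _⟩
  refine ⟨i0, ?_⟩
  have hαnn : 0 ≤ influence i0 f := KKL.influence_nonneg i0 f
  rcases eq_or_lt_of_le hV0 with hVz | hVpos
  · rw [← hVz, Real.zero_rpow (by norm_num)]
    simpa using hαnn
  -- main case : varC f > 0
  set V : ℝ := varC f with hVdef
  set α : ℝ := influence i0 f with hαdef
  set K : ℕ := ⌈Real.log n / 31⌉₊ + 2 with hKdef
  clear_value V α K
  have hK1 : Real.log n / 31 ≤ ((K - 1 : ℕ) : ℝ) := by
    have : (K - 1 : ℕ) = ⌈Real.log n / 31⌉₊ + 1 := by omega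
    rw [this]
    push_cast
    have := Nat.le_ceil (Real.log n / 31)
    linarith
  have hK2 : ((K - 1 : ℕ) : ℝ) ≤ (K : ℝ) := by
    have : (K - 1 : ℕ) ≤ K := Nat.sub_le K 1
    exact_mod_cast this
  have hKge : (2:ℝ) ≤ (K : ℝ) := by
    have : 2 ≤ K := by omega
    exact_mod_cast this
  have hK1nn : (0:ℝ) ≤ ((K - 1 : ℕ) : ℝ) := Nat.cast_nonneg _
  have h3Knn : (0:ℝ) < (3:ℝ) ^ K := by positivity
  -- Step A : pair influences control total pair weight
  have hpairs : ∑ S : Finset (Fin n), ((S.card : ℝ) * ((S.card - 1 : ℕ) : ℝ)) * KKL.coef f S ^ 2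
      ≤ (1/1000) * V * (Real.log n) ^ 2 / 4 := by
    have hcp := KKL.count_pairs (Fin n) (fun S => KKL.coef f S ^ 2)
    rw [← hcp]
    have hβnn : 0 ≤ (1/1000 : ℝ) * V * (Real.log n / n) ^ 2 := by positivity
    have hstep : ∀ i : Fin n, ∑ j ∈ Finset.univ.erase i,
        ∑ S ∈ Finset.univ.filter (fun S : Finset (Fin n) => i ∈ S ∧ j ∈ S),
          KKL.coef f S ^ 2
        ≤ (n : ℝ) * ((1/1000) * V * (Real.log n / n) ^ 2 / 4) := by
      intro i
      have hje : ∀ j ∈ Finset.univ.erase i,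
          ∑ S ∈ Finset.univ.filter (fun S : Finset (Fin n) => i ∈ S ∧ j ∈ S),
            KKL.coef f S ^ 2
          ≤ (1/1000) * V * (Real.log n / n) ^ 2 / 4 := by
        intro j hj
        have hne : i ≠ j := fun e => (Finset.mem_erase.1 hj).1 e.symm
        have h4 := KKL.influence2_ge hf i j
        have hlt := (hB i j hne).le
        linarith
      calc ∑ j ∈ Finset.univ.erase i, ∑ S ∈ Finset.univ.filter
            (fun S : Finset (Fin n) => i ∈ S ∧ j ∈ S), KKL.coef f S ^ 2
          ≤ ∑ _j ∈ Finset.univ.erase i, ((1/1000) * V * (Real.log n / n) ^ 2 / 4) :=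
            Finset.sum_le_sum hje
        _ = ((Finset.univ.erase i).card : ℝ) * ((1/1000) * V * (Real.log n / n) ^ 2 / 4) := by
            rw [Finset.sum_const, nsmul_eq_mul]
        _ ≤ (n : ℝ) * ((1/1000) * V * (Real.log n / n) ^ 2 / 4) := by
            apply mul_le_mul_of_nonneg_right _ (by positivity)
            have : (Finset.univ.erase i).card ≤ n := by
              calc (Finset.univ.erase i).card ≤ Finset.univ.card :=
                Finset.card_le_card (Finset.erase_subset _ _)
              _ = n := by rw [Finset.card_univ, Fintype.card_fin]
            exact_mod_cast this
    calc ∑ i : Fin n, ∑ j ∈ Finset.univ.erase i,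
          ∑ S ∈ Finset.univ.filter (fun S : Finset (Fin n) => i ∈ S ∧ j ∈ S),
            KKL.coef f S ^ 2
        ≤ ∑ _i : Fin n, (n : ℝ) * ((1/1000) * V * (Real.log n / n) ^ 2 / 4) :=
          Finset.sum_le_sum fun i _ => hstep i
      _ = (n : ℝ) * ((n : ℝ) * ((1/1000) * V * (Real.log n / n) ^ 2 / 4)) := by
          rw [Finset.sum_const, Finset.card_univ, Fintype.card_fin, nsmul_eq_mul]
      _ = (1/1000) * V * (Real.log n) ^ 2 / 4 := by
          field_simp
  -- Step B : tail bound
  have hTail : ∑ S ∈ Finset.univ.filter (fun S : Finset (Fin n) => K ≤ S.card),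
      KKL.coef f S ^ 2 ≤ V / 2 := by
    have hTnn : 0 ≤ ∑ S ∈ Finset.univ.filter (fun S : Finset (Fin n) => K ≤ S.card),
        KKL.coef f S ^ 2 := Finset.sum_nonneg fun S _ => sq_nonneg _
    have hκpos : (0:ℝ) < (K : ℝ) * ((K - 1 : ℕ) : ℝ) := by
      have : (1:ℝ) ≤ ((K - 1 : ℕ) : ℝ) := by
        have : 1 ≤ K - 1 := by omega
        exact_mod_cast this
      nlinarith
    have h1 : (K : ℝ) * ((K - 1 : ℕ) : ℝ) * ∑ S ∈ Finset.univ.filter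
        (fun S : Finset (Fin n) => K ≤ S.card), KKL.coef f S ^ 2
        ≤ ∑ S : Finset (Fin n), ((S.card : ℝ) * ((S.card - 1 : ℕ) : ℝ)) * KKL.coef f S ^ 2 := by
      rw [Finset.mul_sum]
      calc ∑ S ∈ Finset.univ.filter (fun S : Finset (Fin n) => K ≤ S.card),
            (K : ℝ) * ((K - 1 : ℕ) : ℝ) * KKL.coef f S ^ 2
          ≤ ∑ S ∈ Finset.univ.filter (fun S : Finset (Fin n) => K ≤ S.card),
            ((S.card : ℝ) * ((S.card - 1 : ℕ) : ℝ)) * KKL.coef f S ^ 2 := by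
            refine Finset.sum_le_sum fun S hS => ?_
            have hKS : K ≤ S.card := (Finset.mem_filter.1 hS).2
            apply mul_le_mul_of_nonneg_right _ (sq_nonneg _)
            have c1 : (K : ℝ) ≤ (S.card : ℝ) := by exact_mod_cast hKS
            have c2 : ((K - 1 : ℕ) : ℝ) ≤ ((S.card - 1 : ℕ) : ℝ) := by
              have : K - 1 ≤ S.card - 1 := Nat.sub_le_sub_right hKS 1
              exact_mod_cast this
            apply mul_le_mul c1 c2 hK1nn (Nat.cast_nonneg _)
        _ ≤ ∑ S : Finset (Fin n), ((S.card : ℝ) * ((S.card - 1 : ℕ) : ℝ)) * KKL.coef f S ^ 2 := by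
            apply Finset.sum_le_sum_of_subset_of_nonneg (Finset.filter_subset _ _)
            intro S _ _
            have : (0:ℝ) ≤ (S.card : ℝ) * ((S.card - 1 : ℕ) : ℝ) :=
              mul_nonneg (Nat.cast_nonneg _) (Nat.cast_nonneg _)
            exact mul_nonneg this (sq_nonneg _)
    have h3 : (1/1000 : ℝ) * V * (Real.log n) ^ 2 / 4
        ≤ (K : ℝ) * ((K - 1 : ℕ) : ℝ) * (V / 2) := by
      have hκ : (Real.log n / 31) * (Real.log n / 31) ≤ (K : ℝ) * ((K - 1 : ℕ) : ℝ) := by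
        have h31 : 0 ≤ Real.log n / 31 := by positivity
        nlinarith [hK1, hK2, h31, hK1nn]
      nlinarith [hV0, hlogn, hκ, sq_nonneg (Real.log n)]
    have h4 : (K : ℝ) * ((K - 1 : ℕ) : ℝ) * ∑ S ∈ Finset.univ.filter
        (fun S : Finset (Fin n) => K ≤ S.card), KKL.coef f S ^ 2
        ≤ (K : ℝ) * ((K - 1 : ℕ) : ℝ) * (V / 2) := le_trans h1 (le_trans hpairs h3)
    exact le_of_mul_le_mul_left h4 hκpos
  -- Step C : low-level bound
  have hLow : ∑ S ∈ Finset.univ.filter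
      (fun S : Finset (Fin n) => 0 < S.card ∧ S.card < K), KKL.coef f S ^ 2
      ≤ (n : ℝ) * ((3:ℝ) ^ K * (α * Real.sqrt α)) := by
    have h0 := KKL.low_count (Fin n) (fun S => KKL.coef f S ^ 2) (fun S => sq_nonneg _) K
    refine h0.trans ?_
    have hstep : ∀ i : Fin n, ∑ k ∈ Finset.range K, ∑ S ∈ Finset.univ.filter
        (fun S : Finset (Fin n) => S.card = k ∧ i ∈ S), KKL.coef f S ^ 2
        ≤ (3:ℝ) ^ K * (α * Real.sqrt α) := by
      intro i
      have hIi : 0 ≤ influence i f := KKL.influence_nonneg i f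
      have hIα : influence i f ≤ α := hmax i (Finset.mem_univ i)
      calc ∑ k ∈ Finset.range K, ∑ S ∈ Finset.univ.filter
            (fun S : Finset (Fin n) => S.card = k ∧ i ∈ S), KKL.coef f S ^ 2
          ≤ ∑ k ∈ Finset.range K, (3:ℝ) ^ k * (α * Real.sqrt α) := by
            refine Finset.sum_le_sum fun k _ => ?_
            refine (KKL.level_bound hf i k).trans ?_
            exact mul_le_mul_of_nonneg_left (KKL.mono_xsqrt' hIi hIα) (by positivity)
        _ = (∑ k ∈ Finset.range K, (3:ℝ) ^ k) * (α * Real.sqrt α) := by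
            rw [Finset.sum_mul]
        _ ≤ (3:ℝ) ^ K * (α * Real.sqrt α) := by
            apply mul_le_mul_of_nonneg_right (KKL.geom_le K) (by positivity)
    calc ∑ i : Fin n, ∑ k ∈ Finset.range K, ∑ S ∈ Finset.univ.filter
          (fun S : Finset (Fin n) => S.card = k ∧ i ∈ S), KKL.coef f S ^ 2
        ≤ ∑ _i : Fin n, (3:ℝ) ^ K * (α * Real.sqrt α) :=
          Finset.sum_le_sum fun i _ => hstep i
      _ = (n : ℝ) * ((3:ℝ) ^ K * (α * Real.sqrt α)) := by
          rw [Finset.sum_const, Finset.card_univ, Fintype.card_fin, nsmul_eq_mul]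
  -- Step D : combine
  have hVsplit : V ≤ (∑ S ∈ Finset.univ.filter
      (fun S : Finset (Fin n) => 0 < S.card ∧ S.card < K), KKL.coef f S ^ 2)
      + ∑ S ∈ Finset.univ.filter (fun S : Finset (Fin n) => K ≤ S.card),
          KKL.coef f S ^ 2 := by
    have hdisj : Disjoint (Finset.univ.filter
        (fun S : Finset (Fin n) => 0 < S.card ∧ S.card < K))
        (Finset.univ.filter (fun S : Finset (Fin n) => K ≤ S.card)) := by
      rw [Finset.disjoint_filter]
      intro S _ h1
      omega
    rw [← Finset.sum_union hdisj]
    have hsub : Finset.univ.erase (∅ : Finset (Fin n))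
        ⊆ (Finset.univ.filter (fun S : Finset (Fin n) => 0 < S.card ∧ S.card < K))
          ∪ Finset.univ.filter (fun S : Finset (Fin n) => K ≤ S.card) := by
      intro S hS
      have hne : S ≠ ∅ := (Finset.mem_erase.1 hS).1
      have hpos : 0 < S.card := Finset.card_pos.2 (Finset.nonempty_iff_ne_empty.2 hne)
      rcases lt_or_ge S.card K with h | h
      · exact Finset.mem_union_left _ (Finset.mem_filter.2 ⟨Finset.mem_univ _, hpos, h⟩)
      · exact Finset.mem_union_right _ (Finset.mem_filter.2 ⟨Finset.mem_univ _, h⟩)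
    calc V = ∑ S ∈ Finset.univ.erase (∅ : Finset (Fin n)), KKL.coef f S ^ 2 :=
        hVdef.trans KKL.varC_eq
      _ ≤ _ := Finset.sum_le_sum_of_subset_of_nonneg hsub fun S _ _ => sq_nonneg _
  have hhalf : V / 2 ≤ (n : ℝ) * ((3:ℝ) ^ K * (α * Real.sqrt α)) := by
    linarith
  -- Step E : conclude
  apply KKL.mono_xsqrt (by positivity) hαnn
  have h3K := KKL.pow3_bound hn
  rw [← hKdef] at h3K
  set R : ℝ := 1/1000 * V ^ ((11:ℝ)/15) * ((1:ℝ)/(n:ℝ)) ^ ((11:ℝ)/15) with hRdef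
  clear_value R
  have hinv0 : (0:ℝ) < 1/(n:ℝ) := by positivity
  have hRR : R * Real.sqrt R
      = ((1/1000) * Real.sqrt (1/1000)) * (V ^ ((11:ℝ)/10))
        * ((1/(n:ℝ)) ^ ((11:ℝ)/10)) := by
    have s1 : Real.sqrt R = Real.sqrt (1/1000) * Real.sqrt (V ^ ((11:ℝ)/15))
        * Real.sqrt (((1:ℝ)/(n:ℝ)) ^ ((11:ℝ)/15)) := by
      rw [hRdef, Real.sqrt_mul (by positivity), Real.sqrt_mul (by norm_num)]
    have s2 : Real.sqrt (V ^ ((11:ℝ)/15)) = V ^ ((11:ℝ)/30) := by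
      rw [Real.sqrt_eq_rpow, ← Real.rpow_mul hV0]
      norm_num
    have s3 : Real.sqrt (((1:ℝ)/(n:ℝ)) ^ ((11:ℝ)/15)) = ((1:ℝ)/(n:ℝ)) ^ ((11:ℝ)/30) := by
      rw [Real.sqrt_eq_rpow, ← Real.rpow_mul hinv0.le]
      norm_num
    have s4 : V ^ ((11:ℝ)/15) * V ^ ((11:ℝ)/30) = V ^ ((11:ℝ)/10) := by
      rw [← Real.rpow_add hVpos]; norm_num
    have s5 : ((1:ℝ)/(n:ℝ)) ^ ((11:ℝ)/15) * ((1:ℝ)/(n:ℝ)) ^ ((11:ℝ)/30)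
        = ((1:ℝ)/(n:ℝ)) ^ ((11:ℝ)/10) := by
      rw [← Real.rpow_add hinv0]; norm_num
    rw [s1, s2, s3, hRdef]
    rw [← s4, ← s5]
    ring
  have hVle : V ^ ((11:ℝ)/10) ≤ V := by
    have : V ^ ((11:ℝ)/10) = V * V ^ ((1:ℝ)/10) := by
      rw [show ((11:ℝ)/10) = 1 + 1/10 by norm_num, Real.rpow_add hVpos, Real.rpow_one]
    rw [this]
    calc V * V ^ ((1:ℝ)/10) ≤ V * 1 :=
        mul_le_mul_of_nonneg_left (Real.rpow_le_one hV0 hV1 (by norm_num)) hV0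
      _ = V := mul_one V
  have hBsplit : ((1:ℝ)/(n:ℝ)) ^ ((11:ℝ)/10) = (1/(n:ℝ)) * ((1:ℝ)/(n:ℝ)) ^ ((1:ℝ)/10) := by
    rw [show ((11:ℝ)/10) = 1 + 1/10 by norm_num, Real.rpow_add hinv0, Real.rpow_one]
  have hone : ((1:ℝ)/(n:ℝ)) ^ ((1:ℝ)/10) * (n:ℝ) ^ ((1:ℝ)/10) = 1 := by
    rw [← Real.mul_rpow hinv0.le hn0.le, one_div_mul_cancel hn0.ne', Real.one_rpow]
  -- final chain : 2 n 3^K (R √R) ≤ V ≤ 2 n 3^K (α √α)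
  have hfac : (0:ℝ) < 2 * (n:ℝ) * (3:ℝ) ^ K := by positivity
  have hkey1 : 2 * (n:ℝ) * (3:ℝ) ^ K * (R * Real.sqrt R) ≤ V := by
    rw [hRR]
    have hsc : Real.sqrt (1/1000 : ℝ) ≤ 1 := by
      calc Real.sqrt (1/1000 : ℝ) ≤ Real.sqrt 1 := Real.sqrt_le_sqrt (by norm_num)
        _ = 1 := Real.sqrt_one
    have e1 : 2 * (n:ℝ) * (3:ℝ) ^ K * (((1/1000) * Real.sqrt (1/1000)) * (V ^ ((11:ℝ)/10))
          * ((1/(n:ℝ)) ^ ((11:ℝ)/10)))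
        ≤ 2 * (n:ℝ) * (27 * (n:ℝ) ^ ((1:ℝ)/10)) * (((1/1000) * 1) * V
          * ((1/(n:ℝ)) * ((1:ℝ)/(n:ℝ)) ^ ((1:ℝ)/10))) := by
      rw [hBsplit]
      have hb1 : (0:ℝ) ≤ (1/(n:ℝ)) * ((1:ℝ)/(n:ℝ)) ^ ((1:ℝ)/10) := by positivity
      have hb2 : (0:ℝ) ≤ V ^ ((11:ℝ)/10) := Real.rpow_nonneg hV0 _
      have m1 : ((1/1000 : ℝ) * Real.sqrt (1/1000)) * (V ^ ((11:ℝ)/10))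
          ≤ ((1/1000) * 1) * V := by
        apply mul_le_mul _ hVle hb2 (by norm_num)
        exact mul_le_mul_of_nonneg_left hsc (by norm_num)
      have m2 : (0:ℝ) ≤ ((1/1000 : ℝ) * Real.sqrt (1/1000)) :=
        mul_nonneg (by norm_num) (Real.sqrt_nonneg _)
      apply mul_le_mul
      · apply mul_le_mul_of_nonneg_left h3K (by positivity)
      · exact mul_le_mul m1 le_rfl hb1 (mul_nonneg (by norm_num) hV0)
      · exact mul_nonneg (mul_nonneg m2 hb2) hb1
      · positivity
    refine e1.trans ?_
    have e2 : 2 * (n:ℝ) * (27 * (n:ℝ) ^ ((1:ℝ)/10)) * (((1/1000) * 1) * V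
          * ((1/(n:ℝ)) * ((1:ℝ)/(n:ℝ)) ^ ((1:ℝ)/10)))
        = (54/1000) * V * ((n:ℝ) * (1/(n:ℝ)))
          * (((1:ℝ)/(n:ℝ)) ^ ((1:ℝ)/10) * (n:ℝ) ^ ((1:ℝ)/10)) := by
      ring
    rw [e2, hone, mul_one_div_cancel hn0.ne', mul_one, mul_one]
    linarith [hV0]
  have hkey2 : V ≤ 2 * (n:ℝ) * (3:ℝ) ^ K * (α * Real.sqrt α) := by
    have e3 : 2 * (n:ℝ) * (3:ℝ) ^ K * (α * Real.sqrt α)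
        = 2 * ((n:ℝ) * ((3:ℝ) ^ K * (α * Real.sqrt α))) := by ring
    rw [e3]
    linarith [hhalf]
  have := le_trans hkey1 hkey2
  exact le_of_mul_le_mul_left this hfac
end
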